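/- arXiv:1410.5000 — 3 statements merged into one kernel-verified Lean document; each statement's English description precedes it below -/
import Mathlib

section
/- There is a polynomial p such that for every n ≥ 1 there exists a nondeterministic finite automaton over the alphabet {0,1} with at most p(n) states whose accepted language is exactly { u ++ v : u, v ∈ {0,1}^n and val(v) ≠ val(u) + 1 }, where val(x) denotes the natural number whose big-endian binary representation (most significant bit first) is x. -/
/-- The natural number whose big-endian binary representation
(most significant bit first) is `x`. -/
def bval (x : List Bool) : ℕ :=
  x.foldl (fun acc b => 2 * acc + (if b then 1 else 0)) 0

lemma bval_foldl (x : List Bool) (a : ℕ) :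
    x.foldl (fun acc b => 2 * acc + (if b then 1 else 0)) a = a * 2 ^ x.length + bval x := by
  induction x generalizing a with
  | nil => simp [bval]
  | cons b x ih =>
    simp only [List.foldl_cons, List.length_cons, bval]
    rw [ih, ih (2 * 0 + _)]
    ring

lemma bval_cons (b : Bool) (x : List Bool) :
    bval (b :: x) = (if b then 1 else 0) * 2 ^ x.length + bval x := by
  simp only [bval, List.foldl_cons]
  rw [bval_foldl]
  simp [bval]

lemma bval_append (x y : List Bool) :
    bval (x ++ y) = bval x * 2 ^ y.length + bval y := by
  simp only [bval, List.foldl_append]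
  rw [bval_foldl]; rfl

lemma bval_lt (x : List Bool) : bval x < 2 ^ x.length := by
  induction x with
  | nil => simp [bval]
  | cons b x ih =>
    rw [bval_cons]
    rcases b with _ | _ <;> simp [pow_succ] <;> omega

lemma bval_replicate_true (k : ℕ) : bval (List.replicate k true) = 2 ^ k - 1 := by
  induction k with
  | zero => simp [bval]
  | succ k ih =>
    rw [List.replicate_succ, bval_cons, ih]
    have : 1 ≤ 2 ^ k := Nat.one_le_two_pow
    simp [List.length_replicate, pow_succ]
    omega

lemma bval_replicate_false (k : ℕ) : bval (List.replicate k false) = 0 := by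
  induction k with
  | zero => simp [bval]
  | succ k ih => rw [List.replicate_succ, bval_cons, ih]; simp

lemma bval_inj : ∀ (x y : List Bool), x.length = y.length → bval x = bval y → x = y := by
  intro x
  induction x with
  | nil => intro y h _; simpa using (h.symm)
  | cons b x ih =>
    intro y h hv
    rcases y with _ | ⟨c, y⟩
    · simp at h
    · simp only [List.length_cons, Nat.succ_inj] at h
      rw [bval_cons, bval_cons, h] at hv
      have hx := bval_lt x
      have hy := bval_lt y
      rw [h] at hx
      have hbc : b = c := by
        rcases b with _ | _ <;> rcases c with _ | _ <;> simp_all <;> omega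
      subst hbc
      have : bval x = bval y := by omega
      rw [ih y h this]

lemma last_false_decomp : ∀ u : List Bool,
    (∀ b ∈ u, b = true) ∨ ∃ a k, u = a ++ false :: List.replicate k true := by
  intro u
  induction u using List.reverseRecOn with
  | nil => left; simp
  | append_singleton u b ih =>
    rcases b with _ | _
    · right; exact ⟨u, 0, by simp⟩
    · rcases ih with h | ⟨a, k, rfl⟩
      · left; intro c hc
        rcases List.mem_append.mp hc with h1 | h1
        · exact h c h1
        · simpa using h1
      · right
        refine ⟨a, k + 1, ?_⟩
        simp [List.replicate_succ' (n := k)]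

lemma pattern_bval {a : List Bool} {k : ℕ} :
    bval (a ++ true :: List.replicate k false) = bval (a ++ false :: List.replicate k true) + 1 := by
  rw [bval_append, bval_append, bval_cons, bval_cons, bval_replicate_true, bval_replicate_false]
  have : 1 ≤ 2 ^ k := Nat.one_le_two_pow
  simp only [List.length_replicate, List.length_cons, if_true, Bool.false_eq_true, if_false]
  omega

lemma bval_succ_iff {u v : List Bool} (h : u.length = v.length) :
    bval v = bval u + 1 ↔
      ∃ a k, u = a ++ false :: List.replicate k true ∧ v = a ++ true :: List.replicate k false := by
  constructor
  · intro hv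
    rcases last_false_decomp u with hall | ⟨a, k, rfl⟩
    · exfalso
      have hu : u = List.replicate u.length true := List.eq_replicate_length.mpr hall
      have h1 : bval u = 2 ^ u.length - 1 := by rw [hu] at *; simpa using bval_replicate_true _
      have h2 := bval_lt v
      rw [← h] at h2
      have : 1 ≤ 2 ^ u.length := Nat.one_le_two_pow
      omega
    · refine ⟨a, k, rfl, ?_⟩
      have hlen : (a ++ true :: List.replicate k false).length = v.length := by
        simpa using h
      refine (bval_inj _ _ hlen ?_).symm
      rw [pattern_bval, hv]
  · rintro ⟨a, k, rfl, rfl⟩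
    exact pattern_bval

section Comb
variable {u v : List Bool} {n : ℕ}

-- positions in the pattern word
lemma pat_at_lt {a : List Bool} {b c : Bool} {k t : ℕ} (h : t < a.length) :
    (a ++ b :: List.replicate k c)[t]? = a[t]? :=
  List.getElem?_append_left h

lemma pat_at_eq {a : List Bool} {b c : Bool} {k : ℕ} :
    (a ++ b :: List.replicate k c)[a.length]? = some b := by
  rw [List.getElem?_append_right le_rfl, Nat.sub_self, List.getElem?_cons_zero]

lemma pat_at_gt {a : List Bool} {b c : Bool} {k t : ℕ} (h1 : a.length < t)
    (h2 : t < a.length + k + 1) :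
    (a ++ b :: List.replicate k c)[t]? = some c := by
  rw [List.getElem?_append_right (le_of_lt h1)]
  obtain ⟨s, hs⟩ : ∃ s, t - a.length = s + 1 := ⟨t - a.length - 1, by omega⟩
  rw [hs, List.getElem?_cons_succ, List.getElem?_replicate_of_lt (by omega)]

def Qprop (u v : List Bool) (n : ℕ) : Prop :=
  (∀ t, t < n → u[t]? = some true) ∨
  (∃ i j, i < j ∧ j < n ∧ v[i]? ≠ u[i]? ∧ u[j]? = some false) ∨
  (∃ i, i < n ∧ v[i]? = u[i]? ∧ ∀ j, i < j → j < n → u[j]? = some true)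

lemma P_not_Q (hu : u.length = n) (hv : v.length = n)
    (hP : ∃ a k, u = a ++ false :: List.replicate k true ∧ v = a ++ true :: List.replicate k false) :
    ¬ Qprop u v n := by
  obtain ⟨a, k, hu', hv'⟩ := hP
  have hn : n = a.length + k + 1 := by rw [← hu, hu']; simp; omega
  have hufalse : u[a.length]? = some false := by rw [hu']; exact pat_at_eq
  have hvtrue : v[a.length]? = some true := by rw [hv']; exact pat_at_eq
  have hugt : ∀ t, a.length < t → t < n → u[t]? = some true := by
    intro t h1 h2; rw [hu']; exact pat_at_gt h1 (by omega)
  have hvgt : ∀ t, a.length < t → t < n → v[t]? = some false := by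
    intro t h1 h2; rw [hv']; exact pat_at_gt h1 (by omega)
  have heqlt : ∀ t, t < a.length → v[t]? = u[t]? := by
    intro t h; rw [hu', hv', pat_at_lt h, pat_at_lt h]
  rintro (h | ⟨i, j, hij, hjn, hne, hj⟩ | ⟨i, hin, heq, hsuf⟩)
  · have := h a.length (by omega)
    rw [hufalse] at this; simp at this
  · rcases lt_trichotomy i a.length with h1 | h1 | h1
    · exact hne (heqlt i h1)
    · have := hugt j (by omega) hjn
      rw [hj] at this; simp at this
    · have := hugt j (by omega) hjn
      rw [hj] at this; simp at this
  · rcases lt_trichotomy i a.length with h1 | h1 | h1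
    · have := hsuf a.length h1 (by omega)
      rw [hufalse] at this; simp at this
    · subst h1
      rw [hufalse, hvtrue] at heq; simp at heq
    · rw [hugt i h1 hin, hvgt i h1 hin] at heq; simp at heq

lemma not_Q_P (hu : u.length = n) (hv : v.length = n) (hQ : ¬ Qprop u v n) :
    ∃ a k, u = a ++ false :: List.replicate k true ∧ v = a ++ true :: List.replicate k false := by
  unfold Qprop at hQ
  push_neg at hQ
  obtain ⟨h1, h2, h3⟩ := hQ
  -- u is not all true
  have hdecomp : ∃ a k, u = a ++ false :: List.replicate k true := by
    rcases last_false_decomp u with hall | h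
    · exfalso
      obtain ⟨t, htn, ht⟩ := h1
      have htl : t < u.length := by omega
      rw [List.getElem?_eq_getElem htl] at ht
      exact ht (by rw [hall _ (List.getElem_mem htl)])
    · exact h
  obtain ⟨a, k, hu'⟩ := hdecomp
  have hn : n = a.length + k + 1 := by rw [← hu, hu']; simp; omega
  have hufalse : u[a.length]? = some false := by rw [hu']; exact pat_at_eq
  have hugt : ∀ t, a.length < t → t < n → u[t]? = some true := by
    intro t ha htn; rw [hu']; exact pat_at_gt ha (by omega)
  refine ⟨a, k, hu', ?_⟩
  apply List.ext_getElem?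
  intro t
  rcases lt_or_ge t n with htn | htn
  · rcases lt_trichotomy t a.length with h' | h' | h'
    · -- copy region
      have := h2 t a.length h' (by omega)
      rw [pat_at_lt h', ← (by rw [hu']; exact pat_at_lt h' : u[t]? = a[t]?)]
      by_contra hne
      exact (this (by simpa using hne)) hufalse
    · -- flip position
      subst h'
      rw [pat_at_eq]
      have hvl : a.length < v.length := by omega
      rw [List.getElem?_eq_getElem hvl]
      by_contra hne
      have hvf : v[a.length]? = some false := by
        rw [List.getElem?_eq_getElem hvl]
        rcases h : v[a.length] with _ | _
        · rfl
        · exact absurd (by rw [h]) hne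
      obtain ⟨j, hij, hjn, hj⟩ := h3 a.length (by omega) (by rw [hvf, hufalse])
      exact hj (hugt j hij hjn)
    · -- tail region
      rw [pat_at_gt h' (by omega)]
      by_contra hne
      have hvl : t < v.length := by omega
      have hvt : v[t]? = some true := by
        rw [List.getElem?_eq_getElem hvl]
        rcases h : v[t] with _ | _
        · exact absurd (by rw [List.getElem?_eq_getElem hvl, h]) hne
        · rfl
      obtain ⟨j, hij, hjn, hj⟩ := h3 t htn (by rw [hvt, hugt t h' htn])
      exact hj (hugt j (by omega) hjn)
  · rw [List.getElem?_eq_none (by omega), List.getElem?_eq_none (by simp; omega)]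

lemma main_iff (hu : u.length = n) (hv : v.length = n) :
    bval v ≠ bval u + 1 ↔ Qprop u v n := by
  rw [ne_eq, bval_succ_iff (hu.trans hv.symm)]
  constructor
  · intro h
    by_contra hQ
    exact h (not_Q_P hu hv hQ)
  · intro hQ hP
    exact P_not_Q hu hv hP hQ

end Comb

section ProdNFA
variable {ι : Type} {m : ℕ} {A : ι → ℕ → Bool → Prop}

/-- NFA accepting the union over `i : ι` of product languages of length `m`
given by per-position constraints `A i`. -/
def prodNFA (ι : Type) (m : ℕ) (A : ι → ℕ → Bool → Prop) : NFA Bool (ι × Fin (m + 1)) where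
  step := fun p b => {q | q.1 = p.1 ∧ (q.2 : ℕ) = (p.2 : ℕ) + 1 ∧ A p.1 (p.2 : ℕ) b}
  start := {p | (p.2 : ℕ) = 0}
  accept := {p | (p.2 : ℕ) = m}

lemma prodNFA_eval (x : List Bool) :
    (prodNFA ι m A).eval x =
      {p | (p.2 : ℕ) = x.length ∧ ∀ t b, x[t]? = some b → A p.1 t b} := by
  induction x using List.reverseRecOn with
  | nil =>
    ext p
    simp [prodNFA, NFA.eval]
  | append_singleton x c ih =>
    rw [NFA.eval_append_singleton, ih]
    ext q
    simp only [NFA.mem_stepSet, Set.mem_setOf_eq, List.length_append, List.length_cons,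
      List.length_nil]
    constructor
    · rintro ⟨p, ⟨hp2, hpx⟩, hq1, hq2, hA⟩
      refine ⟨by omega, ?_⟩
      intro t b hb
      rcases lt_trichotomy t x.length with h | h | h
      · rw [List.getElem?_append_left h] at hb
        rw [hq1]; exact hpx t b hb
      · subst h
        rw [List.getElem?_concat_length] at hb
        rw [hq1, ← hp2]
        exact (Option.some.injEq _ _ ▸ hb) ▸ hA
      · rw [List.getElem?_eq_none (by simp; omega)] at hb
        exact absurd hb (by simp)
    · rintro ⟨hq2, hx⟩
      have hlt : x.length < m + 1 := by omega
      refine ⟨(q.1, ⟨x.length, hlt⟩), ⟨rfl, ?_⟩, rfl, by simp [hq2], ?_⟩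
      · intro t b hb
        have ht : t < x.length := (List.getElem?_eq_some_iff.mp hb).1
        exact hx t b (by rw [List.getElem?_append_left ht]; exact hb)
      · exact hx x.length c (List.getElem?_concat_length (l := x) (a := c))

lemma prodNFA_accepts :
    (prodNFA ι m A).accepts =
      {x | x.length = m ∧ ∃ i, ∀ t b, x[t]? = some b → A i t b} := by
  ext x
  rw [NFA.mem_accepts]
  show (∃ p ∈ (prodNFA ι m A).accept, p ∈ (prodNFA ι m A).eval x) ↔ _
  rw [prodNFA_eval]
  constructor
  · rintro ⟨p, hacc, hp2, hx⟩
    exact ⟨by have : (p.2 : ℕ) = m := hacc; omega, p.1, hx⟩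
  · rintro ⟨hlen, i, hx⟩
    exact ⟨(i, ⟨m, by omega⟩), by simp [prodNFA], by simp [hlen], hx⟩

end ProdNFA

section Main

/-- Index type for the pieces of the union. -/
abbrev Idx (n : ℕ) : Type := Option ((Fin n × Fin n × Bool) ⊕ (Fin n × Bool))

/-- Per-position constraints for each piece. -/
def Acon (n : ℕ) : Idx n → ℕ → Bool → Prop
  | none => fun t b => t < n → b = true
  | some (.inl (i, j, c)) => fun t b =>
      (i : ℕ) < (j : ℕ) ∧ (t = (i : ℕ) → b = c) ∧ (t = (j : ℕ) → b = false) ∧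
        (t = n + (i : ℕ) → b = !c)
  | some (.inr (i, c)) => fun t b =>
      (t = (i : ℕ) → b = c) ∧ ((i : ℕ) < t → t < n → b = true) ∧ (t = n + (i : ℕ) → b = c)

lemma lang_eq (n : ℕ) (hn : 1 ≤ n) :
    {x : List Bool | x.length = 2 * n ∧ ∃ i, ∀ t b, x[t]? = some b → Acon n i t b} =
    {x : List Bool | ∃ u v : List Bool,
      x = u ++ v ∧ u.length = n ∧ v.length = n ∧ bval v ≠ bval u + 1} := by
  ext x
  simp only [Set.mem_setOf_eq]
  constructor
  · rintro ⟨hlen, ii, h⟩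
    set u := x.take n with hu'
    set v := x.drop n with hv'
    have hu : u.length = n := by simp [hu']; omega
    have hv : v.length = n := by simp [hv']; omega
    have hx : x = u ++ v := (List.take_append_drop n x).symm
    refine ⟨u, v, hx, hu, hv, ?_⟩
    rw [main_iff hu hv]
    have hxu : ∀ t, t < n → x[t]? = u[t]? := by
      intro t ht
      rw [hx]; exact List.getElem?_append_left (by omega)
    have hxv : ∀ i, i < n → x[n + i]? = v[i]? := by
      intro i hi
      rw [hx, List.getElem?_append_right (by omega)]
      congr 1; omega
    have husome : ∀ t, t < n → ∃ b, u[t]? = some b := by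
      intro t ht; exact ⟨u[t]'(by omega), List.getElem?_eq_getElem (by omega)⟩
    have hvsome : ∀ t, t < n → ∃ b, v[t]? = some b := by
      intro t ht; exact ⟨v[t]'(by omega), List.getElem?_eq_getElem (by omega)⟩
    match ii with
    | none =>
      left
      intro t ht
      obtain ⟨b, hb⟩ := husome t ht
      have := h t b (by rw [hxu t ht]; exact hb)
      rw [hb, this ht]
    | some (.inl (i, j, c)) =>
      right; left
      obtain ⟨bu, hbu⟩ := husome i i.isLt
      obtain ⟨bj, hbj⟩ := husome j j.isLt
      obtain ⟨bv, hbv⟩ := hvsome i i.isLt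
      have hu1 := h i bu (by rw [hxu i i.isLt]; exact hbu)
      have hu2 := h j bj (by rw [hxu j j.isLt]; exact hbj)
      have hv1 := h (n + i) bv (by rw [hxv i i.isLt]; exact hbv)
      obtain ⟨hij, hic, -, -⟩ := hu1
      obtain ⟨-, -, hjf, -⟩ := hu2
      obtain ⟨-, -, -, hinc⟩ := hv1
      refine ⟨i, j, hij, j.isLt, ?_, by rw [hbj, hjf rfl]⟩
      rw [hbu, hbv, hic rfl, hinc (by omega)]
      simp
    | some (.inr (i, c)) =>
      right; right
      obtain ⟨bu, hbu⟩ := husome i i.isLt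
      obtain ⟨bv, hbv⟩ := hvsome i i.isLt
      have hu1 := h i bu (by rw [hxu i i.isLt]; exact hbu)
      have hv1 := h (n + i) bv (by rw [hxv i i.isLt]; exact hbv)
      refine ⟨i, i.isLt, ?_, ?_⟩
      · rw [hbu, hbv, hu1.1 rfl, hv1.2.2 (by omega)]
      · intro j hij hjn
        obtain ⟨bj, hbj⟩ := husome j hjn
        have := h j bj (by rw [hxu j hjn]; exact hbj)
        rw [hbj, this.2.1 hij hjn]
  · rintro ⟨u, v, hx, hu, hv, hval⟩
    have hlen : x.length = 2 * n := by rw [hx]; simp; omega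
    refine ⟨hlen, ?_⟩
    have hxu : ∀ t, t < n → x[t]? = u[t]? := by
      intro t ht
      rw [hx]; exact List.getElem?_append_left (by omega)
    have hxv : ∀ i, i < n → x[n + i]? = v[i]? := by
      intro i hi
      rw [hx, List.getElem?_append_right (by omega)]
      congr 1; omega
    rw [main_iff hu hv] at hval
    rcases hval with h1 | ⟨i, j, hij, hjn, hne, hjf⟩ | ⟨i, hin, heq, hsuf⟩
    · refine ⟨none, ?_⟩
      intro t b hb ht
      have := h1 t ht
      rw [hxu t ht, this] at hb
      simpa using hb.symm
    · have hin : i < n := by omega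
      set c := u[i]'(by omega) with hc
      have huc : u[i]? = some c := List.getElem?_eq_getElem (by omega)
      have hvc : v[i]? = some (!c) := by
        have : v[i]? = some (v[i]'(by omega)) := List.getElem?_eq_getElem (by omega)
        rw [this]
        rcases hb : v[i]'(by omega) with _ | _ <;> rcases hcc : c with _ | _ <;>
          simp_all [huc, this]
      refine ⟨some (.inl (⟨i, hin⟩, ⟨j, hjn⟩, c)), ?_⟩
      intro t b hb
      refine ⟨hij, ?_, ?_, ?_⟩
      · intro ht
        have hh : x[t]? = u[i]? := by rw [ht]; exact hxu i hin
        rw [hh, huc] at hb; exact (Option.some.inj hb).symm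
      · intro ht
        have hh : x[t]? = u[j]? := by rw [ht]; exact hxu j hjn
        rw [hh, hjf] at hb; exact (Option.some.inj hb).symm
      · intro ht
        have hh : x[t]? = v[i]? := by rw [ht]; exact hxv i hin
        rw [hh, hvc] at hb; exact (Option.some.inj hb).symm
    · set c := u[i]'(by omega) with hc
      have huc : u[i]? = some c := List.getElem?_eq_getElem (by omega)
      have hvc : v[i]? = some c := by rw [heq, huc]
      refine ⟨some (.inr (⟨i, hin⟩, c)), ?_⟩
      intro t b hb
      refine ⟨?_, ?_, ?_⟩
      · intro ht
        have hh : x[t]? = u[i]? := by rw [ht]; exact hxu i hin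
        rw [hh, huc] at hb; exact (Option.some.inj hb).symm
      · intro hit htn
        rw [hxu t htn, hsuf t hit htn] at hb
        exact (Option.some.inj hb).symm
      · intro ht
        have hh : x[t]? = v[i]? := by rw [ht]; exact hxv i hin
        rw [hh, hvc] at hb; exact (Option.some.inj hb).symm

end Main


/-- There is a polynomial `p` such that for every `n ≥ 1` there
is an NFA over `{0,1}` with at most `p n` states accepting exactly
`{ u ++ v : u, v ∈ {0,1}^n, bval v ≠ bval u + 1 }`. -/
theorem succ_mismatch_nfa :
    ∃ p : Polynomial ℕ, ∀ n : ℕ, 1 ≤ n →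
      ∃ (σ : Type) (instσ : Fintype σ) (M : NFA Bool σ),
        @Fintype.card σ instσ ≤ p.eval n ∧
        M.accepts = {x : List Bool | ∃ u v : List Bool,
          x = u ++ v ∧ u.length = n ∧ v.length = n ∧ bval v ≠ bval u + 1} := by
  refine ⟨(2 * Polynomial.X ^ 2 + 2 * Polynomial.X + 1) * (2 * Polynomial.X + 1), ?_⟩
  intro n hn
  refine ⟨Idx n × Fin (2 * n + 1), inferInstance, prodNFA (Idx n) (2 * n) (Acon n), ?_, ?_⟩
  · have : Fintype.card (Idx n × Fin (2 * n + 1)) = (n * (n * 2) + n * 2 + 1) * (2 * n + 1) := by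
      simp [Fintype.card_option]
    rw [this]
    simp [Polynomial.eval_mul, Polynomial.eval_add, Polynomial.eval_pow]
    ring_nf
    omega
  · rw [prodNFA_accepts, lang_eq n hn]
end

section
/- Let Q be a finite set of Turing-machine states and let Γ = {0, 1, ▷, □, $, ↵, ;, :} ∪ Q (all nine kinds of symbols distinct, Q disjoint from the other eight symbols). There is a polynomial p (independent of Q and N) such that for every N ≥ 1 there exists an NFA over Γ with at most p(N + |Q|) states whose accepted language is exactly the set of words over Γ containing a factor of the form u : x ; v where u, v ∈ {0,1}^N, x is either a single bit c ∈ {0,1} or a state symbol followed by a bit (q c with q ∈ Q, c ∈ {0,1}), and val(v) ≠ val(u) + 1 (val denoting the big-endian binary value of an N-bit string). -/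
namespace Paper

/-- The encoding alphabet `Γ = {0, 1, ▷, □, $, ↵, ;, :} ∪ Q`
(nine kinds of symbols, all distinct). -/
inductive Sym (Q : Type) where
  | bit (b : Bool)   -- the two bit symbols 0 and 1
  | ltri             -- ▷
  | sq               -- □
  | dollar           -- $
  | newline          -- ↵
  | semi             -- ;
  | colon            -- :
  | state (q : Q)    -- the state symbols
  deriving DecidableEq

/-- Big-endian binary value of a bit string (most significant bit first). -/
def bval (x : List Bool) : ℕ :=
  x.foldl (fun acc b => 2 * acc + (if b then 1 else 0)) 0

/-- A cell content: either a single bit, or a state symbol followed by a bit. -/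
def IsCellContent {Q : Type} (x : List (Sym Q)) : Prop :=
  (∃ c : Bool, x = [Sym.bit c]) ∨ (∃ (q : Q) (c : Bool), x = [Sym.state q, Sym.bit c])

/-! ### Arithmetic on big-endian bit strings -/

lemma bval_aux (l : List Bool) (a : ℕ) :
    l.foldl (fun acc b => 2 * acc + (if b then 1 else 0)) a
      = a * 2 ^ l.length + bval l := by
  induction l generalizing a with
  | nil => simp [bval]
  | cons b t ih =>
    simp only [List.foldl_cons, List.length_cons, bval]
    rw [ih, ih (2 * 0 + if b then 1 else 0)]
    ring

lemma bval_cons (b : Bool) (t : List Bool) :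
    bval (b :: t) = (if b then 1 else 0) * 2 ^ t.length + bval t := by
  show List.foldl _ _ _ = _
  rw [List.foldl_cons, bval_aux]
  simp

lemma bval_append (x y : List Bool) :
    bval (x ++ y) = bval x * 2 ^ y.length + bval y := by
  show List.foldl _ _ _ = _
  rw [List.foldl_append, bval_aux]
  rfl

lemma bval_lt (x : List Bool) : bval x < 2 ^ x.length := by
  induction x with
  | nil => simp [bval]
  | cons b t ih =>
    rw [bval_cons]
    have : 2 ^ (b :: t).length = 2 ^ t.length * 2 := by
      simp [pow_succ]
    rw [this]
    cases b <;> simp <;> omega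

lemma bval_replicate_true (k : ℕ) : bval (List.replicate k true) = 2 ^ k - 1 := by
  induction k with
  | zero => simp [bval]
  | succ n ih =>
    rw [List.replicate_succ, bval_cons, ih]
    have : 1 ≤ 2 ^ n := Nat.one_le_two_pow
    simp [List.length_replicate, pow_succ]
    omega

lemma bval_replicate_false (k : ℕ) : bval (List.replicate k false) = 0 := by
  induction k with
  | zero => simp [bval]
  | succ n ih => rw [List.replicate_succ, bval_cons, ih]; simp

lemma low_ne {M a b r s : ℕ} (hr : r < M) (hs : s < M) (hne : r ≠ s) :
    a * M + r ≠ b * M + s := by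
  intro h
  apply hne
  have h1 : (a * M + r) % M = r := by
    rw [Nat.mul_comm, Nat.mul_add_mod, Nat.mod_eq_of_lt hr]
  have h2 : (b * M + s) % M = s := by
    rw [Nat.mul_comm, Nat.mul_add_mod, Nat.mod_eq_of_lt hs]
  rw [← h1, ← h2, h]

lemma bval_succ_decomp (a : List Bool) (k : ℕ) :
    bval (a ++ true :: List.replicate k false)
      = bval (a ++ false :: List.replicate k true) + 1 := by
  rw [bval_append, bval_append, bval_cons, bval_cons, bval_replicate_true,
    bval_replicate_false]
  have h1 : 1 ≤ 2 ^ k := Nat.one_le_two_pow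
  simp only [List.length_cons, List.length_replicate, Bool.false_eq_true, if_false, if_true]
  omega

lemma arith_ones {N : ℕ} (v : List Bool) (hv : v.length = N) :
    bval v ≠ bval (List.replicate N true) + 1 := by
  have h1 := bval_lt v
  have h2 : 1 ≤ 2 ^ N := Nat.one_le_two_pow
  rw [bval_replicate_true, hv] at *
  omega

lemma arith1 {a a' v₂ : List Bool} {b : Bool} {k : ℕ}
    (hv : v₂.length = k) :
    bval (a' ++ b :: v₂) ≠ bval (a ++ b :: List.replicate k true) + 1 := by
  rw [bval_append, bval_append, bval_cons, bval_cons, bval_replicate_true]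
  simp only [List.length_cons, List.length_replicate, hv]
  have h1 : 1 ≤ 2 ^ k := Nat.one_le_two_pow
  have h2 : bval v₂ < 2 ^ k := hv ▸ bval_lt v₂
  have hp : (2 : ℕ) ^ (k + 1) = 2 ^ k * 2 := pow_succ 2 k
  have hY : (bval a + 1) * 2 ^ (k + 1) = bval a * 2 ^ (k + 1) + 2 ^ (k + 1) := by ring
  intro h
  cases b
  · simp only [Bool.false_eq_true, if_false] at h
    exact low_ne (M := 2 ^ (k + 1)) (a := bval a') (b := bval a)
      (r := bval v₂) (s := 2 ^ k) (by omega) (by omega) (by omega) (by omega)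
  · simp only [if_true] at h
    exact low_ne (M := 2 ^ (k + 1)) (a := bval a') (b := bval a + 1)
      (r := 2 ^ k + bval v₂) (s := 0) (by omega) (by omega) (by omega) (by omega)

lemma bval_mid_lt (c d : List Bool) :
    bval (c ++ false :: d) + 1 < 2 ^ (c ++ false :: d).length := by
  rw [bval_append, bval_cons]
  have h1 := bval_lt c
  have h2 := bval_lt d
  have h3 : bval c * 2 ^ (false :: d).length ≤ (2 ^ c.length - 1) * 2 ^ (false :: d).length :=
    Nat.mul_le_mul_right _ (by omega)
  have h4 : (2 ^ c.length - 1) * 2 ^ (false :: d).length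
      = 2 ^ (c ++ false :: d).length - 2 ^ (false :: d).length := by
    rw [Nat.sub_mul, one_mul, List.length_append, pow_add]
  have h5 : 2 ^ (false :: d).length = 2 * 2 ^ d.length := by
    simp [List.length_cons, pow_succ]; ring
  have h6 : 2 ^ (false :: d).length ≤ 2 ^ (c ++ false :: d).length :=
    Nat.pow_le_pow_right (by norm_num) (by simp)
  simp only [Bool.false_eq_true, if_false] at *
  omega

lemma arith2 {a a' c d v₂ : List Bool} {b : Bool}
    (hv : v₂.length = (c ++ false :: d).length) :
    bval (a' ++ (!b) :: v₂) ≠ bval (a ++ b :: (c ++ false :: d)) + 1 := by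
  set k := (c ++ false :: d).length with hk
  rw [bval_append, bval_append, bval_cons, bval_cons]
  simp only [List.length_cons, hv, ← hk]
  have h1 : 1 ≤ 2 ^ k := Nat.one_le_two_pow
  have h2 : bval v₂ < 2 ^ k := hv ▸ bval_lt v₂
  have h3 : bval (c ++ false :: d) + 1 < 2 ^ k := hk ▸ bval_mid_lt c d
  have hp : (2 : ℕ) ^ (k + 1) = 2 ^ k * 2 := pow_succ 2 k
  intro h
  cases b
  · simp only [Bool.not_false, if_true, Bool.false_eq_true, if_false] at h
    exact low_ne (M := 2 ^ (k + 1)) (a := bval a') (b := bval a)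
      (r := 2 ^ k + bval v₂) (s := bval (c ++ false :: d) + 1)
      (by omega) (by omega) (by omega) (by omega)
  · simp only [Bool.not_true, if_true, Bool.false_eq_true, if_false] at h
    exact low_ne (M := 2 ^ (k + 1)) (a := bval a') (b := bval a)
      (r := bval v₂) (s := 2 ^ k + (bval (c ++ false :: d) + 1))
      (by omega) (by omega) (by omega) (by omega)

lemma exists_last_false {u : List Bool} (h : u ≠ List.replicate u.length true) :
    ∃ a k, u = a ++ false :: List.replicate k true := by
  induction u using List.reverseRecOn with
  | nil => simp at h
  | append_singleton w b ih =>
    cases b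
    · exact ⟨w, 0, by simp⟩
    · have hw : w ≠ List.replicate w.length true := by
        intro hww
        apply h
        rw [List.length_append, List.length_singleton, List.replicate_succ']
        rw [← hww]
      rcases ih hw with ⟨a, k, rfl⟩
      refine ⟨a, k + 1, ?_⟩
      rw [List.replicate_succ']
      simp


section Generic
variable {A I : Type}

/-- `m` matches the pattern `p` (a list of symbol sets) position-wise. -/
def MemF (m : List A) (p : List (Set A)) : Prop :=
  List.Forall₂ (fun a S => a ∈ S) m p

lemma memF_length {m : List A} {p : List (Set A)} (h : MemF m p) :
    m.length = p.length := h.length_eq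

lemma memF_append_iff {p q : List (Set A)} {m : List A} :
    MemF m (p ++ q) ↔ ∃ m₁ m₂, m = m₁ ++ m₂ ∧ MemF m₁ p ∧ MemF m₂ q := by
  constructor
  · intro h
    exact ⟨m.take p.length, m.drop p.length, (List.take_append_drop _ m).symm,
      List.forall₂_take_append m p q h, List.forall₂_drop_append m p q h⟩
  · rintro ⟨m₁, m₂, rfl, h₁, h₂⟩
    exact List.rel_append h₁ h₂

lemma memF_singleton_iff {S : Set A} {m : List A} :
    MemF m [S] ↔ ∃ a, m = [a] ∧ a ∈ S := by
  constructor
  · intro h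
    rcases List.forall₂_cons_right_iff.mp h with ⟨a, l, ha, hl, rfl⟩
    rcases List.forall₂_nil_right_iff.mp hl with rfl
    exact ⟨a, rfl, ha⟩
  · rintro ⟨a, rfl, ha⟩
    exact List.Forall₂.cons ha List.Forall₂.nil

lemma take_succ_getD {p : List (Set A)} {k : ℕ} (hk : k < p.length) :
    p.take (k + 1) = p.take k ++ [p.getD k ∅] := by
  rw [List.take_succ, List.getElem?_eq_getElem hk, List.getD_eq_getElem _ _ hk]
  rfl

lemma memF_take_snoc_iff {p : List (Set A)} {k : ℕ} (hk0 : 0 < k) (hk : k ≤ p.length)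
    {m : List A} :
    MemF m (p.take k) ↔
      ∃ m' a, m = m' ++ [a] ∧ MemF m' (p.take (k - 1)) ∧ a ∈ p.getD (k - 1) ∅ := by
  have hk1 : k - 1 < p.length := by omega
  have hsplit : p.take k = p.take (k - 1) ++ [p.getD (k - 1) ∅] := by
    have := take_succ_getD hk1
    rwa [Nat.sub_add_cancel hk0] at this
  rw [hsplit, memF_append_iff]
  constructor
  · rintro ⟨m₁, m₂, rfl, h₁, h₂⟩
    rcases memF_singleton_iff.mp h₂ with ⟨a, rfl, ha⟩
    exact ⟨m₁, a, rfl, h₁, ha⟩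
  · rintro ⟨m', a, rfl, h₁, ha⟩
    exact ⟨m', [a], rfl, h₁, memF_singleton_iff.mpr ⟨a, rfl, ha⟩⟩

lemma snoc_inj {l₁ l₂ : List A} {a b : A} (h : l₁ ++ [a] = l₂ ++ [b]) :
    l₁ = l₂ ∧ a = b := by
  have := List.append_inj' h rfl
  exact ⟨this.1, by simpa using this.2⟩

/-- a `Fin` successor capped at `L` -/
def nextF (L : ℕ) (k : Fin (L + 1)) : Fin (L + 1) := ⟨min ((k : ℕ) + 1) L, by omega⟩

/-- The NFA searching for a factor matching one of the patterns `pat i`. -/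
def patNFA (pat : I → List (Set A)) (L : ℕ) : NFA A (Unit ⊕ I × Fin (L + 1)) where
  start := {Sum.inl ()}
  accept := {t | ∃ i k, t = Sum.inr (i, k) ∧ (k : ℕ) = (pat i).length}
  step s a :=
    match s with
    | Sum.inl _ => {t | t = Sum.inl () ∨
        ∃ i, (0 < (pat i).length ∧ a ∈ (pat i).getD 0 ∅) ∧ t = Sum.inr (i, nextF L 0)}
    | Sum.inr (i, k) => {t |
        ((k : ℕ) < (pat i).length ∧ a ∈ (pat i).getD (k : ℕ) ∅ ∧
            t = Sum.inr (i, nextF L k)) ∨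
        ((k : ℕ) = (pat i).length ∧ t = Sum.inr (i, k))}

/-- reachability invariant -/
def Reach (pat : I → List (Set A)) (w : List A) (i : I) (k : ℕ) : Prop :=
  if k = (pat i).length then ∃ α m ω, w = α ++ m ++ ω ∧ MemF m (pat i)
  else ∃ α m, w = α ++ m ∧ MemF m ((pat i).take k)

lemma reach_of_take (pat : I → List (Set A)) {w : List A} {i : I} {k : ℕ}
    (h : ∃ α m, w = α ++ m ∧ MemF m ((pat i).take k)) : Reach pat w i k := by
  unfold Reach
  split_ifs with hkl
  · rcases h with ⟨α, m, rfl, hm⟩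
    rw [hkl, List.take_length] at hm
    exact ⟨α, m, [], by simp, hm⟩
  · exact h

variable (pat : I → List (Set A)) (L : ℕ)

lemma mem_eval (hL : ∀ i, (pat i).length ≤ L) (hne : ∀ i, 0 < (pat i).length)
    (w : List A) :
    ∀ s, s ∈ (patNFA pat L).eval w ↔
      (s = Sum.inl () ∨ ∃ i, ∃ k : Fin (L + 1), s = Sum.inr (i, k) ∧ 0 < (k : ℕ) ∧
        (k : ℕ) ≤ (pat i).length ∧ Reach pat w i (k : ℕ)) := by
  induction w using List.reverseRecOn with
  | nil =>
    intro s
    show s ∈ ({Sum.inl ()} : Set _) ↔ _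
    constructor
    · intro hs; left; exact hs
    · rintro (rfl | ⟨i, k, rfl, hk0, hkle, hreach⟩)
      · rfl
      · exfalso
        unfold Reach at hreach
        split_ifs at hreach with hkl
        · rcases hreach with ⟨α, m, ω, hw, hm⟩
          have hm' := memF_length hm
          have := congrArg List.length hw
          simp at this
          omega
        · rcases hreach with ⟨α, m, hw, hm⟩
          have hm' := memF_length hm
          rw [List.length_take] at hm'
          have := congrArg List.length hw
          simp at this
          omega
  | append_singleton w a ih =>
    intro s
    rw [NFA.eval_append_singleton, NFA.mem_stepSet]
    constructor
    · rintro ⟨t, ht, hstep⟩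
      rw [ih] at ht
      rcases ht with rfl | ⟨i, k, rfl, hk0, hkle, hreach⟩
      · -- t = inl
        rcases hstep with rfl | ⟨i, ⟨hlen, hmem⟩, rfl⟩
        · left; rfl
        · right
          have hv : ((nextF L 0 : Fin (L + 1)) : ℕ) = 1 := by
            have h1 := hL i
            have h2 := hne i
            simp [nextF]
            omega
          refine ⟨i, nextF L 0, rfl, by omega, by omega, ?_⟩
          rw [hv]
          apply reach_of_take
          refine ⟨w, [a], rfl, ?_⟩
          rw [memF_take_snoc_iff (by norm_num) hlen]
          exact ⟨[], a, rfl, by simp [MemF], hmem⟩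
      · -- t = inr (i, k)
        rcases hstep with ⟨hlt, hmem, rfl⟩ | ⟨heq, rfl⟩
        · -- advance
          right
          have hv : ((nextF L k : Fin (L + 1)) : ℕ) = (k : ℕ) + 1 := by
            have := hL i
            simp [nextF]
            omega
          refine ⟨i, nextF L k, rfl, by omega, by omega, ?_⟩
          rw [hv]
          apply reach_of_take
          unfold Reach at hreach
          rw [if_neg (by omega)] at hreach
          rcases hreach with ⟨α, m, rfl, hm⟩
          refine ⟨α, m ++ [a], by simp, ?_⟩
          rw [memF_take_snoc_iff (by omega) (by omega)]
          exact ⟨m, a, rfl, by simpa using hm, by simpa using hmem⟩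
        · -- self loop
          right
          refine ⟨i, k, rfl, hk0, hkle, ?_⟩
          unfold Reach at hreach ⊢
          rw [if_pos heq] at hreach ⊢
          rcases hreach with ⟨α, m, ω, rfl, hm⟩
          exact ⟨α, m, ω ++ [a], by simp, hm⟩
    · rintro (rfl | ⟨i, k, rfl, hk0, hkle, hreach⟩)
      · exact ⟨Sum.inl (), (ih _).mpr (Or.inl rfl), Or.inl rfl⟩
      · -- need a predecessor
        unfold Reach at hreach
        -- first reduce to the "take" form or the self-loop case
        have main : (∃ α m, w ++ [a] = α ++ m ∧ MemF m ((pat i).take (k : ℕ))) →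
            ∃ t ∈ (patNFA pat L).eval w, Sum.inr (i, k) ∈ (patNFA pat L).step t a := by
          rintro ⟨α, m, hw, hm⟩
          rw [memF_take_snoc_iff hk0 hkle] at hm
          rcases hm with ⟨m', b, rfl, hm', hb⟩
          rw [← List.append_assoc] at hw
          rcases snoc_inj hw with ⟨hw', rfl⟩
          by_cases hk1 : (k : ℕ) = 1
          · -- predecessor is inl
            refine ⟨Sum.inl (), (ih _).mpr (Or.inl rfl), Or.inr ⟨i, ⟨?_, ?_⟩, ?_⟩⟩
            · exact hne i
            · rw [hk1] at hb; simpa using hb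
            · congr 1
              ext
              · rfl
              · show _ = _
                simp [nextF]
                omega
          · -- predecessor is inr (i, k-1)
            have hklt : (k : ℕ) - 1 < L + 1 := by omega
            refine ⟨Sum.inr (i, ⟨(k : ℕ) - 1, hklt⟩), (ih _).mpr ?_, ?_⟩
            · right
              refine ⟨i, ⟨(k : ℕ) - 1, hklt⟩, rfl, by simp; omega, by simp; omega, ?_⟩
              show Reach pat w i ((k : ℕ) - 1)
              unfold Reach
              rw [if_neg (by omega)]
              exact ⟨α, m', hw', hm'⟩
            · left
              refine ⟨by simp; omega, by simpa using hb, ?_⟩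
              congr 1
              ext
              · rfl
              · show _ = _
                simp [nextF]
                omega
        split_ifs at hreach with hkl
        · rcases hreach with ⟨α, m, ω, hw, hm⟩
          rcases List.eq_nil_or_concat ω with rfl | ⟨ω', b, rfl⟩
          · apply main
            refine ⟨α, m, by simpa using hw, ?_⟩
            rw [hkl, List.take_length]
            exact hm
          · -- self loop predecessor
            rcases snoc_inj (by simpa [← List.append_assoc] using hw) with ⟨hw', rfl⟩
            refine ⟨Sum.inr (i, k), (ih _).mpr ?_, Or.inr ⟨hkl, rfl⟩⟩
            right
            refine ⟨i, k, rfl, hk0, hkle, ?_⟩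
            unfold Reach
            rw [if_pos hkl]
            exact ⟨α, m, ω', hw', hm⟩
        · exact main hreach

lemma patNFA_accepts [Nonempty I] (hL : ∀ i, (pat i).length ≤ L) (hne : ∀ i, 0 < (pat i).length) :
    (patNFA pat L).accepts =
      {w | ∃ (i : I) (α m ω : List A), w = α ++ m ++ ω ∧ MemF m (pat i)} := by
  ext w
  rw [NFA.mem_accepts]
  constructor
  · rintro ⟨s, ⟨i, k, heq2, hklen⟩, hs⟩
    subst heq2
    have hs' : Sum.inr (i, k) ∈ (patNFA pat L).eval w := hs
    have := (mem_eval pat L hL hne w _).mp hs'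
    rcases this with h | ⟨i', k', heq, hk0, hkle, hreach⟩
    · exact absurd h (by simp)
    · obtain ⟨rfl, rfl⟩ : i' = i ∧ k' = k := by
        injection heq with h1
        injection h1 with h2 h3
        exact ⟨h2.symm, h3.symm⟩
      unfold Reach at hreach
      rw [if_pos hklen] at hreach
      rcases hreach with ⟨α, m, ω, rfl, hm⟩
      exact ⟨_, α, m, ω, rfl, hm⟩
  · rintro ⟨i, α, m, ω, rfl, hm⟩
    have hlen : (pat i).length < L + 1 := by have := hL i; omega
    refine ⟨Sum.inr (i, ⟨(pat i).length, hlen⟩), ⟨i, ⟨(pat i).length, hlen⟩, rfl, rfl⟩, ?_⟩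
    show Sum.inr (i, (⟨(pat i).length, hlen⟩ : Fin (L+1))) ∈ (patNFA pat L).eval (α ++ m ++ ω)
    rw [mem_eval pat L hL hne]
    right
    refine ⟨i, ⟨(pat i).length, hlen⟩, rfl, by simpa using hne i, by simp, ?_⟩
    show Reach pat _ i _
    unfold Reach
    rw [if_pos rfl]
    exact ⟨α, m, ω, rfl, hm⟩

end Generic


section Patterns
variable {Q : Type}

def BitS {Q : Type} : Set (Sym Q) := Set.range Sym.bit
def StS {Q : Type} : Set (Sym Q) := Set.range Sym.state

def cellPat {Q : Type} : Bool → List (Set (Sym Q))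
  | false => [BitS]
  | true => [StS, BitS]

def midPat {Q : Type} (e : Bool) : List (Set (Sym Q)) :=
  [{Sym.colon}] ++ cellPat e ++ [{Sym.semi}]

abbrev PatIdx (N : ℕ) : Type := (Unit ⊕ (Fin N × Bool) ⊕ (Fin N × Fin N × Bool)) × Bool

def onesPat {Q : Type} (N : ℕ) (e : Bool) : List (Set (Sym Q)) :=
  List.replicate N {Sym.bit true} ++ midPat e ++ List.replicate N BitS

def pats {Q : Type} (N : ℕ) : PatIdx N → List (Set (Sym Q))
  | (Sum.inl _, e) => onesPat N e
  | (Sum.inr (Sum.inl (i, b)), e) =>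
      (List.replicate (i : ℕ) BitS ++ [{Sym.bit b}]
          ++ List.replicate (N - 1 - i) {Sym.bit true})
        ++ midPat e ++
      (List.replicate (i : ℕ) BitS ++ [{Sym.bit b}] ++ List.replicate (N - 1 - i) BitS)
  | (Sum.inr (Sum.inr (i, j, b)), e) =>
      if (i : ℕ) + (j : ℕ) + 2 ≤ N then
        (List.replicate (i : ℕ) BitS ++ [{Sym.bit b}] ++ List.replicate (j : ℕ) BitS
            ++ [{Sym.bit false}] ++ List.replicate (N - 2 - i - j) BitS)
          ++ midPat e ++
        (List.replicate (i : ℕ) BitS ++ [{Sym.bit (!b)}] ++ List.replicate (N - 1 - i) BitS)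
      else onesPat N e

lemma midPat_length (e : Bool) : (midPat (Q := Q) e).length ≤ 4 := by
  cases e <;> simp [midPat, cellPat]

lemma midPat_pos (e : Bool) : 0 < (midPat (Q := Q) e).length := by
  cases e <;> simp [midPat, cellPat]

lemma pats_length {N : ℕ} (idx : PatIdx N) :
    (pats (Q := Q) N idx).length ≤ 2 * N + 4 := by
  obtain ⟨c, e⟩ := idx
  have h1 := midPat_length (Q := Q) e
  rcases c with _ | ⟨i, b⟩ | ⟨i, j, b⟩
  · simp [pats, onesPat]; omega
  · have hi := i.isLt
    simp [pats]; omega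
  · have hi := i.isLt
    have hj := j.isLt
    by_cases hc : (i : ℕ) + (j : ℕ) + 2 ≤ N
    · rw [pats, if_pos hc]; simp; omega
    · rw [pats, if_neg hc]; simp [onesPat]; omega

lemma pats_pos {N : ℕ} (idx : PatIdx N) : 0 < (pats (Q := Q) N idx).length := by
  obtain ⟨c, e⟩ := idx
  have h1 := midPat_pos (Q := Q) e
  rcases c with _ | ⟨i, b⟩ | ⟨i, j, b⟩
  · simp [pats, onesPat]; omega
  · simp [pats]
  · by_cases hc : (i : ℕ) + (j : ℕ) + 2 ≤ N
    · rw [pats, if_pos hc]; simp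
    · rw [pats, if_neg hc]; simp [onesPat]; omega

/-! ### matching lemmas for the basic pieces -/

lemma memF_anybits_iff {k : ℕ} {m : List (Sym Q)} :
    MemF m (List.replicate k BitS) ↔ ∃ u : List Bool, u.length = k ∧ m = u.map Sym.bit := by
  induction k generalizing m with
  | zero =>
    constructor
    · intro h
      rcases List.forall₂_nil_right_iff.mp h with rfl
      exact ⟨[], rfl, rfl⟩
    · rintro ⟨u, hu, rfl⟩
      rcases List.length_eq_zero_iff.mp hu with rfl
      exact List.Forall₂.nil
  | succ n ih =>
    constructor
    · intro h
      rw [List.replicate_succ] at h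
      rcases List.forall₂_cons_right_iff.mp h with ⟨a, l, ha, hl, rfl⟩
      rcases ih.mp hl with ⟨u, hu, rfl⟩
      rcases ha with ⟨b, rfl⟩
      exact ⟨b :: u, by simp [hu], rfl⟩
    · rintro ⟨u, hu, rfl⟩
      cases u with
      | nil => simp at hu
      | cons b t =>
        rw [List.replicate_succ]
        exact List.Forall₂.cons ⟨b, rfl⟩ (ih.mpr ⟨t, by simpa using hu, rfl⟩)

lemma memF_repl_single_iff {s : Sym Q} {k : ℕ} {m : List (Sym Q)} :
    MemF m (List.replicate k ({s} : Set (Sym Q))) ↔ m = List.replicate k s := by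
  induction k generalizing m with
  | zero =>
    rw [List.replicate, List.replicate]
    exact ⟨fun h => List.forall₂_nil_right_iff.mp h, fun h => h ▸ List.Forall₂.nil⟩
  | succ n ih =>
    rw [List.replicate_succ, List.replicate_succ]
    constructor
    · intro h
      rcases List.forall₂_cons_right_iff.mp h with ⟨a, l, ha, hl, rfl⟩
      rw [ha, ih.mp hl]
    · rintro rfl
      exact List.Forall₂.cons rfl (ih.mpr rfl)

lemma memF_cell_false {m : List (Sym Q)} :
    MemF m (cellPat false) ↔ ∃ c : Bool, m = [Sym.bit c] := by
  rw [cellPat, memF_singleton_iff]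
  constructor
  · rintro ⟨a, rfl, ⟨c, rfl⟩⟩; exact ⟨c, rfl⟩
  · rintro ⟨c, rfl⟩; exact ⟨Sym.bit c, rfl, ⟨c, rfl⟩⟩

lemma memF_cell_true {m : List (Sym Q)} :
    MemF m (cellPat true) ↔ ∃ (q : Q) (c : Bool), m = [Sym.state q, Sym.bit c] := by
  rw [cellPat]
  constructor
  · intro h
    rcases List.forall₂_cons_right_iff.mp h with ⟨a, l, ha, hl, rfl⟩
    rcases List.forall₂_cons_right_iff.mp hl with ⟨a', l', ha', hl', rfl⟩
    rcases List.forall₂_nil_right_iff.mp hl' with rfl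
    rcases ha with ⟨q, rfl⟩
    rcases ha' with ⟨c, rfl⟩
    exact ⟨q, c, rfl⟩
  · rintro ⟨q, c, rfl⟩
    exact List.Forall₂.cons ⟨q, rfl⟩ (List.Forall₂.cons ⟨c, rfl⟩ List.Forall₂.nil)

lemma isCell_iff {x : List (Sym Q)} : IsCellContent x ↔ ∃ e, MemF x (cellPat e) := by
  constructor
  · rintro (⟨c, rfl⟩ | ⟨q, c, rfl⟩)
    · exact ⟨false, memF_cell_false.mpr ⟨c, rfl⟩⟩
    · exact ⟨true, memF_cell_true.mpr ⟨q, c, rfl⟩⟩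
  · rintro ⟨e, he⟩
    cases e
    · exact Or.inl (memF_cell_false.mp he)
    · exact Or.inr (memF_cell_true.mp he)

lemma memF_full_iff {U V : List (Set (Sym Q))} {e : Bool} {m : List (Sym Q)} :
    MemF m (U ++ midPat e ++ V) ↔
      ∃ mu x mv, MemF mu U ∧ MemF x (cellPat e) ∧ MemF mv V ∧
        m = mu ++ [Sym.colon] ++ x ++ [Sym.semi] ++ mv := by
  constructor
  · intro h
    rcases memF_append_iff.mp h with ⟨m1, mv, rfl, h1, hv⟩
    rcases memF_append_iff.mp h1 with ⟨mu, m2, rfl, hu, h2⟩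
    rw [midPat] at h2
    rcases memF_append_iff.mp h2 with ⟨m3, m4, rfl, h3, h4⟩
    rcases memF_append_iff.mp h3 with ⟨mc, x, rfl, hc, hx⟩
    rcases memF_singleton_iff.mp hc with ⟨a, rfl, ha⟩
    rcases memF_singleton_iff.mp h4 with ⟨a', rfl, ha'⟩
    rcases ha with rfl
    rcases ha' with rfl
    exact ⟨mu, x, mv, hu, hx, hv, by simp [List.append_assoc]⟩
  · rintro ⟨mu, x, mv, hu, hx, hv, rfl⟩
    refine memF_append_iff.mpr ⟨mu ++ [Sym.colon] ++ x ++ [Sym.semi], mv,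
      by simp [List.append_assoc], ?_, hv⟩
    refine memF_append_iff.mpr ⟨mu, [Sym.colon] ++ x ++ [Sym.semi],
      by simp [List.append_assoc], hu, ?_⟩
    rw [midPat]
    refine memF_append_iff.mpr ⟨[Sym.colon] ++ x, [Sym.semi], by simp [List.append_assoc],
      ?_, memF_singleton_iff.mpr ⟨_, rfl, rfl⟩⟩
    exact memF_append_iff.mpr ⟨[Sym.colon], x, rfl, memF_singleton_iff.mpr ⟨_, rfl, rfl⟩, hx⟩

lemma u1_iff {i r : ℕ} {b : Bool} {m : List (Sym Q)} :
    MemF m (List.replicate i BitS ++ [{Sym.bit b}]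
        ++ List.replicate r ({Sym.bit true} : Set (Sym Q))) ↔
      ∃ a : List Bool, a.length = i ∧ m = (a ++ b :: List.replicate r true).map Sym.bit := by
  constructor
  · intro h
    rcases memF_append_iff.mp h with ⟨m1, m2, rfl, h1, h2⟩
    rcases memF_append_iff.mp h1 with ⟨ma, mb, rfl, ha, hb⟩
    rcases memF_anybits_iff.mp ha with ⟨a, hal, rfl⟩
    rcases memF_singleton_iff.mp hb with ⟨s, rfl, hs⟩
    rcases hs with rfl
    rw [memF_repl_single_iff] at h2
    subst h2
    exact ⟨a, hal, by simp [List.map_replicate]⟩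
  · rintro ⟨a, hal, rfl⟩
    refine memF_append_iff.mpr ⟨(a.map Sym.bit) ++ [Sym.bit b],
      (List.replicate r true).map Sym.bit, by simp, ?_, ?_⟩
    · refine memF_append_iff.mpr ⟨a.map Sym.bit, [Sym.bit b], rfl, ?_, ?_⟩
      · exact hal ▸ memF_anybits_iff.mpr ⟨a, rfl, rfl⟩
      · exact memF_singleton_iff.mpr ⟨_, rfl, rfl⟩
    · rw [memF_repl_single_iff]
      simp [List.map_replicate]

lemma v1_iff {i r : ℕ} {c : Bool} {m : List (Sym Q)} :
    MemF m (List.replicate i BitS ++ [{Sym.bit c}] ++ List.replicate r BitS) ↔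
      ∃ v1 v2 : List Bool, v1.length = i ∧ v2.length = r ∧
        m = (v1 ++ c :: v2).map Sym.bit := by
  constructor
  · intro h
    rcases memF_append_iff.mp h with ⟨m1, m2, rfl, h1, h2⟩
    rcases memF_append_iff.mp h1 with ⟨ma, mb, rfl, ha, hb⟩
    rcases memF_anybits_iff.mp ha with ⟨v1, hl1, rfl⟩
    rcases memF_singleton_iff.mp hb with ⟨s, rfl, hs⟩
    rcases hs with rfl
    rcases memF_anybits_iff.mp h2 with ⟨v2, hl2, rfl⟩
    exact ⟨v1, v2, hl1, hl2, by simp⟩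
  · rintro ⟨v1, v2, hl1, hl2, rfl⟩
    refine memF_append_iff.mpr ⟨(v1.map Sym.bit) ++ [Sym.bit c], v2.map Sym.bit,
      by simp, ?_, hl2 ▸ memF_anybits_iff.mpr ⟨v2, rfl, rfl⟩⟩
    refine memF_append_iff.mpr ⟨v1.map Sym.bit, [Sym.bit c], rfl,
      hl1 ▸ memF_anybits_iff.mpr ⟨v1, rfl, rfl⟩, memF_singleton_iff.mpr ⟨_, rfl, rfl⟩⟩

lemma u2_iff {i j r : ℕ} {b : Bool} {m : List (Sym Q)} :
    MemF m (List.replicate i BitS ++ [{Sym.bit b}] ++ List.replicate j BitS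
        ++ [({Sym.bit false} : Set (Sym Q))] ++ List.replicate r BitS) ↔
      ∃ a c d : List Bool, a.length = i ∧ c.length = j ∧ d.length = r ∧
        m = (a ++ b :: (c ++ false :: d)).map Sym.bit := by
  constructor
  · intro h
    rcases memF_append_iff.mp h with ⟨m1, md, rfl, h1, hd⟩
    rcases memF_append_iff.mp h1 with ⟨m2, mf, rfl, h2, hf⟩
    rcases memF_append_iff.mp h2 with ⟨m3, mc, rfl, h3, hc⟩
    rcases memF_append_iff.mp h3 with ⟨ma, mb, rfl, ha, hb⟩
    rcases memF_anybits_iff.mp ha with ⟨a, hal, rfl⟩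
    rcases memF_singleton_iff.mp hb with ⟨s, rfl, hs⟩
    rcases hs with rfl
    rcases memF_anybits_iff.mp hc with ⟨c, hcl, rfl⟩
    rcases memF_singleton_iff.mp hf with ⟨s, rfl, hs'⟩
    rcases hs' with rfl
    rcases memF_anybits_iff.mp hd with ⟨d, hdl, rfl⟩
    exact ⟨a, c, d, hal, hcl, hdl, by simp [List.append_assoc]⟩
  · rintro ⟨a, c, d, hal, hcl, hdl, rfl⟩
    refine memF_append_iff.mpr ⟨(a.map Sym.bit ++ [Sym.bit b] ++ c.map Sym.bit
        ++ [Sym.bit false]), d.map Sym.bit, by simp [List.append_assoc],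
      ?_, hdl ▸ memF_anybits_iff.mpr ⟨d, rfl, rfl⟩⟩
    refine memF_append_iff.mpr ⟨a.map Sym.bit ++ [Sym.bit b] ++ c.map Sym.bit,
      [Sym.bit false], rfl, ?_, memF_singleton_iff.mpr ⟨_, rfl, rfl⟩⟩
    refine memF_append_iff.mpr ⟨a.map Sym.bit ++ [Sym.bit b], c.map Sym.bit, rfl,
      ?_, hcl ▸ memF_anybits_iff.mpr ⟨c, rfl, rfl⟩⟩
    exact memF_append_iff.mpr ⟨a.map Sym.bit, [Sym.bit b], rfl,
      hal ▸ memF_anybits_iff.mpr ⟨a, rfl, rfl⟩, memF_singleton_iff.mpr ⟨_, rfl, rfl⟩⟩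

lemma uOnes_iff {N : ℕ} {m : List (Sym Q)} :
    MemF m (List.replicate N ({Sym.bit true} : Set (Sym Q))) ↔
      m = (List.replicate N true).map Sym.bit := by
  rw [memF_repl_single_iff]
  simp [List.map_replicate]

end Patterns



section Core
variable {Q : Type}

lemma bool_ne {x y : Bool} (h : x ≠ y) : x = !y := by
  cases x <;> cases y <;> simp_all

lemma take_getElem_drop {α : Type} {l : List α} {i : ℕ} (h : i < l.length) :
    l = l.take i ++ l[i] :: l.drop (i + 1) := by
  conv_lhs => rw [← List.take_append_drop i l]
  rw [← List.getElem_cons_drop h]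

lemma drop_replicate {α : Type} (x : α) (k t : ℕ) :
    (List.replicate k x).drop t = List.replicate (k - t) x := by
  induction t generalizing k with
  | zero => simp
  | succ n ih =>
    cases k with
    | zero => simp
    | succ k' =>
      rw [List.replicate_succ, List.drop_succ_cons, ih]
      congr 1
      omega

lemma ones_case {N : ℕ} {e : Bool} {m : List (Sym Q)} (h : MemF m (onesPat N e)) :
    ∃ (u v : List Bool) (x : List (Sym Q)), u.length = N ∧ v.length = N ∧ IsCellContent x ∧
      bval v ≠ bval u + 1 ∧
      m = u.map Sym.bit ++ [Sym.colon] ++ x ++ [Sym.semi] ++ v.map Sym.bit := by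
  rw [onesPat, memF_full_iff] at h
  rcases h with ⟨mu, x, mv, hu, hx, hv, rfl⟩
  rcases uOnes_iff.mp hu with rfl
  rcases memF_anybits_iff.mp hv with ⟨v, hvl, rfl⟩
  exact ⟨List.replicate N true, v, x, by simp, hvl, isCell_iff.mpr ⟨e, hx⟩,
    arith_ones v hvl, rfl⟩

lemma pattern_iff {N : ℕ} (m : List (Sym Q)) :
    (∃ idx : PatIdx N, MemF m (pats N idx)) ↔
      ∃ (u v : List Bool) (x : List (Sym Q)), u.length = N ∧ v.length = N ∧
        IsCellContent x ∧ bval v ≠ bval u + 1 ∧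
        m = u.map Sym.bit ++ [Sym.colon] ++ x ++ [Sym.semi] ++ v.map Sym.bit := by
  constructor
  · rintro ⟨⟨c, e⟩, h⟩
    rcases c with _ | ⟨i, b⟩ | ⟨i, j, b⟩
    · exact ones_case h
    · rw [pats, memF_full_iff] at h
      rcases h with ⟨mu, x, mv, hu, hx, hv, rfl⟩
      rcases u1_iff.mp hu with ⟨a, hal, rfl⟩
      rcases v1_iff.mp hv with ⟨v1, v2, hl1, hl2, rfl⟩
      have hi := i.isLt
      refine ⟨a ++ b :: List.replicate (N - 1 - (i : ℕ)) true, v1 ++ b :: v2, x, ?_, ?_,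
        isCell_iff.mpr ⟨e, hx⟩, arith1 hl2, rfl⟩
      · simp [hal]; omega
      · simp [hl1, hl2]; omega
    · by_cases hc : (i : ℕ) + (j : ℕ) + 2 ≤ N
      · rw [pats, if_pos hc, memF_full_iff] at h
        rcases h with ⟨mu, x, mv, hu, hx, hv, rfl⟩
        rcases u2_iff.mp hu with ⟨a, cc, d, hal, hcl, hdl, rfl⟩
        rcases v1_iff.mp hv with ⟨v1, v2, hl1, hl2, rfl⟩
        have hi := i.isLt
        refine ⟨a ++ b :: (cc ++ false :: d), v1 ++ (!b) :: v2, x, ?_, ?_,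
          isCell_iff.mpr ⟨e, hx⟩, arith2 ?_, rfl⟩
        · simp [hal, hcl, hdl]; omega
        · simp [hl1, hl2]; omega
        · simp [hl2, hcl, hdl]; omega
      · rw [pats, if_neg hc] at h
        exact ones_case h
  · rintro ⟨u, v, x, huN, hvN, hx, hmis, rfl⟩
    rcases isCell_iff.mp hx with ⟨e, hxe⟩
    by_cases hone : u = List.replicate N true
    · refine ⟨(Sum.inl (), e), ?_⟩
      rw [pats, onesPat]
      exact memF_full_iff.mpr ⟨u.map Sym.bit, x, v.map Sym.bit,
        uOnes_iff.mpr (by rw [hone]), hxe, memF_anybits_iff.mpr ⟨v, hvN, rfl⟩, rfl⟩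
    · have hone' : u ≠ List.replicate u.length true := by rwa [huN]
      obtain ⟨a, k, hdec⟩ := exists_last_false hone'
      have hla : a.length + 1 + k = N := by
        have := congrArg List.length hdec
        rw [huN] at this
        simp at this
        omega
      have hsl : (a ++ true :: List.replicate k false).length = N := by simp; omega
      have hbs : bval (a ++ true :: List.replicate k false) = bval u + 1 := by
        rw [hdec]; exact bval_succ_decomp a k
      have hvs : v ≠ a ++ true :: List.replicate k false := by
        intro hh; rw [hh, hbs] at hmis; exact hmis rfl
      obtain ⟨ii, h1, h2, hnei⟩ : ∃ ii, ∃ h1 : ii < v.length,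
          ∃ h2 : ii < (a ++ true :: List.replicate k false).length,
          v[ii] ≠ (a ++ true :: List.replicate k false)[ii] := by
        by_contra hcon
        push_neg at hcon
        exact hvs (List.ext_getElem (by omega) fun n hn1 hn2 => hcon n hn1 hn2)
      have hiiN : ii < N := hvN ▸ h1
      have hvdec : v = v.take ii ++ v[ii] :: v.drop (ii + 1) := take_getElem_drop h1
      have hvtl : (v.take ii).length = ii := by simp; omega
      have hvdl : (v.drop (ii + 1)).length = N - 1 - ii := by simp; omega
      rcases lt_trichotomy ii a.length with hlt | heq | hgt
      · -- zone 1 : mismatch strictly before the last zero of u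
        have hsi : (a ++ true :: List.replicate k false)[ii]'h2 = a[ii]'hlt :=
          List.getElem_append_left hlt
        have hvii : v[ii]'h1 = !(a[ii]'hlt) := by
          rw [hsi] at hnei
          exact bool_ne hnei
        obtain ⟨i, hi⟩ : ∃ i : Fin N, (i : ℕ) = ii := ⟨⟨ii, hiiN⟩, rfl⟩
        obtain ⟨j, hj⟩ : ∃ j : Fin N, (j : ℕ) = a.length - ii - 1 :=
          ⟨⟨a.length - ii - 1, by omega⟩, rfl⟩
        refine ⟨(Sum.inr (Sum.inr (i, j, a[ii]'hlt)), e), ?_⟩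
        rw [pats, if_pos (by omega)]
        apply memF_full_iff.mpr
        refine ⟨u.map Sym.bit, x, v.map Sym.bit, ?_, hxe, ?_, rfl⟩
        · apply u2_iff.mpr
          refine ⟨a.take ii, a.drop (ii + 1), List.replicate k true,
            by simp; omega, by simp; omega, by simp; omega, ?_⟩
          rw [hdec]
          refine congrArg (List.map Sym.bit) ?_
          rw [show a[ii]'hlt :: (List.drop (ii + 1) a ++ false :: List.replicate k true)
              = (a[ii]'hlt :: List.drop (ii + 1) a) ++ (false :: List.replicate k true) from rfl,
            ← List.append_assoc, List.getElem_cons_drop hlt, List.take_append_drop]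
        · apply v1_iff.mpr
          refine ⟨v.take ii, v.drop (ii + 1), by omega, by simp; omega, ?_⟩
          rw [← hvii]
          exact congrArg _ hvdec
      · -- zone 2 : mismatch at the last zero of u
        have hsi : (a ++ true :: List.replicate k false)[ii]'h2 = true := by
          rw [List.getElem_append_right (by omega)]
          simp [heq]
        have hvii : v[ii]'h1 = false := by
          rw [hsi] at hnei
          simpa using bool_ne hnei
        obtain ⟨i, hi⟩ : ∃ i : Fin N, (i : ℕ) = ii := ⟨⟨ii, hiiN⟩, rfl⟩
        refine ⟨(Sum.inr (Sum.inl (i, false)), e), ?_⟩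
        rw [pats]
        apply memF_full_iff.mpr
        refine ⟨u.map Sym.bit, x, v.map Sym.bit, ?_, hxe, ?_, rfl⟩
        · apply u1_iff.mpr
          refine ⟨a, by omega, ?_⟩
          rw [hdec]
          have hk : N - 1 - (i : ℕ) = k := by omega
          rw [hk]
        · apply v1_iff.mpr
          refine ⟨v.take ii, v.drop (ii + 1), by omega, by simp; omega, ?_⟩
          rw [← hvii]
          exact congrArg _ hvdec
      · -- zone 3 : mismatch after the last zero of u
        have hsplit : a ++ true :: List.replicate k false
            = (a ++ [true]) ++ List.replicate k false := by simp
        have hsi : (a ++ true :: List.replicate k false)[ii]'h2 = false := by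
          rw [List.getElem_of_eq hsplit]
          rw [List.getElem_append_right (by simp; omega)]
          simp
        have hvii : v[ii]'h1 = true := by
          rw [hsi] at hnei
          simpa using bool_ne hnei
        have hudrop : u.drop ii = List.replicate (N - ii) true := by
          have husplit : u = (a ++ [false]) ++ List.replicate k true := by
            rw [hdec]; simp
          rw [husplit]
          have hsh : ii = (a ++ [false]).length + (ii - a.length - 1) := by simp; omega
          rw [hsh, ← List.drop_drop, List.drop_left, drop_replicate]
          congr 1
          omega
        obtain ⟨i, hi⟩ : ∃ i : Fin N, (i : ℕ) = ii := ⟨⟨ii, hiiN⟩, rfl⟩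
        have hurep : u = u.take ii ++ true :: List.replicate (N - 1 - (i : ℕ)) true := by
          conv_lhs => rw [← List.take_append_drop ii u]
          rw [hudrop]
          congr 1
          have : N - ii = (N - 1 - (i : ℕ)) + 1 := by omega
          rw [this, List.replicate_succ]
        refine ⟨(Sum.inr (Sum.inl (i, true)), e), ?_⟩
        rw [pats]
        apply memF_full_iff.mpr
        refine ⟨u.map Sym.bit, x, v.map Sym.bit, ?_, hxe, ?_, rfl⟩
        · apply u1_iff.mpr
          refine ⟨u.take ii, by simp; omega, ?_⟩
          conv_lhs => rw [hurep]
        · apply v1_iff.mpr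
          refine ⟨v.take ii, v.drop (ii + 1), by omega, by simp; omega, ?_⟩
          rw [← hvii]
          exact congrArg _ hvdec

end Core



/-- There is a polynomial `p` (independent of `Q` and `N`) such
that for every `N ≥ 1` there is an NFA over `Γ` with at most `p (N + |Q|)`
states accepting exactly the words containing a factor `u : x ; v` with
`u, v ∈ {0,1}^N`, `x` a cell content, and `bval v ≠ bval u + 1`. -/
theorem succ_mismatch_factor_nfa :
    ∃ p : Polynomial ℕ,
      ∀ (Q : Type) (instQ : Fintype Q) (N : ℕ), 1 ≤ N →
        ∃ (σ : Type) (instσ : Fintype σ) (M : NFA (Sym Q) σ),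
          @Fintype.card σ instσ ≤ p.eval (N + @Fintype.card Q instQ) ∧
          M.accepts = {w : List (Sym Q) |
            ∃ (α ω : List (Sym Q)) (u v : List Bool) (x : List (Sym Q)),
              u.length = N ∧ v.length = N ∧ IsCellContent x ∧
              bval v ≠ bval u + 1 ∧
              w = α ++ u.map Sym.bit ++ [Sym.colon] ++ x ++ [Sym.semi] ++
                  v.map Sym.bit ++ ω} := by
  refine ⟨(Polynomial.X + Polynomial.C 3) ^ 4, ?_⟩
  intro Q instQ N hN
  haveI : Nonempty (PatIdx N) := ⟨(Sum.inl (), false)⟩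
  refine ⟨Unit ⊕ PatIdx N × Fin (2 * N + 4 + 1), inferInstance,
    patNFA (pats (Q := Q) N) (2 * N + 4), ?_, ?_⟩
  · -- cardinality bound
    have hcard : Fintype.card (Unit ⊕ PatIdx N × Fin (2 * N + 4 + 1))
        = 1 + ((1 + (N * 2 + N * N * 2)) * 2) * (2 * N + 5) := by
      simp [Fintype.card_sum, Fintype.card_prod, Fintype.card_fin, Fintype.card_fun]
      ring
    have heval : ((Polynomial.X + Polynomial.C 3 : Polynomial ℕ) ^ 4).eval
        (N + Fintype.card Q) = (N + Fintype.card Q + 3) ^ 4 := by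
      simp
    rw [hcard, heval]
    have h1 : 1 + ((1 + (N * 2 + N * N * 2)) * 2) * (2 * N + 5) ≤ (N + 3) ^ 4 := by
      nlinarith [sq_nonneg N, Nat.one_le_iff_ne_zero.mp hN]
    have h2 : (N + 3) ^ 4 ≤ (N + Fintype.card Q + 3) ^ 4 :=
      Nat.pow_le_pow_left (by omega) 4
    omega
  · -- language
    rw [patNFA_accepts (pats (Q := Q) N) (2 * N + 4)
      (fun i => pats_length i) (fun i => pats_pos i)]
    ext w
    constructor
    · rintro ⟨i, α, m, ω, rfl, hm⟩
      obtain ⟨u, v, x, hu, hv, hx, hmis, rfl⟩ := (pattern_iff m).mp ⟨i, hm⟩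
      exact ⟨α, ω, u, v, x, hu, hv, hx, hmis, by simp [List.append_assoc]⟩
    · rintro ⟨α, ω, u, v, x, hu, hv, hx, hmis, rfl⟩
      obtain ⟨i, hm⟩ := (pattern_iff
        (u.map Sym.bit ++ [Sym.colon] ++ x ++ [Sym.semi] ++ v.map Sym.bit)).mpr
        ⟨u, v, x, hu, hv, hx, hmis, rfl⟩
      exact ⟨i, α, u.map Sym.bit ++ [Sym.colon] ++ x ++ [Sym.semi] ++ v.map Sym.bit, ω,
        by simp [List.append_assoc], hm⟩

end Paper
end

section
/- Every trace of Lib with k = l + 2 threads that is not linearizable w.r.t. S_N contains exactly one call event to the method M_Tick, and this call is matched by a return event (i.e., the trace has exactly one completed M_Tick method event and no open M_Tick calls). -/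
namespace Paper

/-- The shared-variable domain `D = {Begin, Run, End}`. -/
inductive DVal where
  | Begin
  | Run
  | End
  deriving DecidableEq

/-- Method names of the library `Lib`: `Sum.inl (Sum.inl γ)` is `M_γ` (γ ∈ Γ),
`Sum.inl (Sum.inr i)` is `M_i` (1 ≤ i ≤ l), and `Sum.inr ()` is `M_Tick`. -/
abbrev MName (Γ : Type) (l : ℕ) := (Γ ⊕ Fin l) ⊕ Unit

/-- The method `M_Tick`. -/
def tickName {Γ : Type} {l : ℕ} : MName Γ l := Sum.inr ()

/-- The method `M_γ`. -/
def gammaName {Γ : Type} {l : ℕ} (γ : Γ) : MName Γ l := Sum.inl (Sum.inl γ)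

/-- The method `M_i`. -/
def insName {Γ : Type} {l : ℕ} (i : Fin l) : MName Γ l := Sum.inl (Sum.inr i)

/-- The final state (program counter) of each method. -/
def finalPC {Γ : Type} {l : ℕ} : MName Γ l → ℕ
  | Sum.inl (Sum.inl _) => 1
  | Sum.inl (Sum.inr _) => 2
  | Sum.inr _ => 2

/-- Internal (read/write) transitions of the methods: `M_γ` reads `Run`;
`M_i` reads `Begin` then reads `End`; `M_Tick` writes `Run` then writes
`End`.  `mTrans m pc d d' pc'` means that method `m` can step from program
counter `pc` with shared value `d` to program counter `pc'` with shared value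
`d'`. -/
def mTrans {Γ : Type} {l : ℕ} (m : MName Γ l) (pc : ℕ) (d d' : DVal)
    (pc' : ℕ) : Prop :=
  match m with
  | Sum.inl (Sum.inl _) =>
      pc = 0 ∧ pc' = 1 ∧ d = DVal.Run ∧ d' = d
  | Sum.inl (Sum.inr _) =>
      (pc = 0 ∧ pc' = 1 ∧ d = DVal.Begin ∧ d' = d) ∨
      (pc = 1 ∧ pc' = 2 ∧ d = DVal.End ∧ d' = d)
  | Sum.inr _ =>
      (pc = 0 ∧ pc' = 1 ∧ d' = DVal.Run) ∨
      (pc = 1 ∧ pc' = 2 ∧ d' = DVal.End)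

/-- Observable labels: calls (with thread and method) and returns (with
thread). -/
inductive Label (Γ : Type) (l k : ℕ) where
  | call (t : Fin k) (m : MName Γ l)
  | ret (t : Fin k)

/-- A configuration of `Lib^k`: the shared value together with, for each
thread, `none` (idle) or the method it is running and its program counter. -/
abbrev LCfg (Γ : Type) (l k : ℕ) := DVal × (Fin k → Option (MName Γ l × ℕ))

/-- `Steps c tr c'` holds iff there is an execution from `c` to `c'` whose
trace (sequence of call/return labels) is `tr`; read/write steps are
unlabelled. -/
inductive Steps {Γ : Type} {l k : ℕ} :
    LCfg Γ l k → List (Label Γ l k) → LCfg Γ l k → Prop where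
  | nil (c : LCfg Γ l k) : Steps c [] c
  | call {d : DVal} {μ : Fin k → Option (MName Γ l × ℕ)} (t : Fin k)
      (m : MName Γ l) {tr : List (Label Γ l k)} {c' : LCfg Γ l k}
      (h : μ t = none)
      (hs : Steps (d, Function.update μ t (some (m, 0))) tr c') :
      Steps (d, μ) (Label.call t m :: tr) c'
  | ret {d : DVal} {μ : Fin k → Option (MName Γ l × ℕ)} (t : Fin k)
      (m : MName Γ l) {tr : List (Label Γ l k)} {c' : LCfg Γ l k}
      (h : μ t = some (m, finalPC m))
      (hs : Steps (d, Function.update μ t none) tr c') :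
      Steps (d, μ) (Label.ret t :: tr) c'
  | internal {d : DVal} {μ : Fin k → Option (MName Γ l × ℕ)} (d' : DVal)
      (t : Fin k) (m : MName Γ l) (pc pc' : ℕ) {tr : List (Label Γ l k)}
      {c' : LCfg Γ l k}
      (h : μ t = some (m, pc)) (ht : mTrans m pc d d' pc')
      (hs : Steps (d', Function.update μ t (some (m, pc'))) tr c') :
      Steps (d, μ) tr c'

/-- `tr` is a trace of `Lib` with `k` threads: the trace of some execution
from the initial configuration (shared value `Begin`, all threads idle). -/
def IsTrace {Γ : Type} {l k : ℕ} (tr : List (Label Γ l k)) : Prop :=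
  ∃ c' : LCfg Γ l k, Steps (DVal.Begin, fun _ => none) tr c'

/-- The thread performing a label. -/
def threadOf {Γ : Type} {l k : ℕ} : Label Γ l k → Fin k
  | Label.call t _ => t
  | Label.ret t => t

/-- Position `a` of `h` carries an open call: a call event with no matching
later return (no later event of the same thread). -/
def IsOpenCall {Γ : Type} {l k : ℕ} (h : List (Label Γ l k)) (a : ℕ) : Prop :=
  ∃ (t : Fin k) (m : MName Γ l), h[a]? = some (Label.call t m) ∧
    ∀ (b : ℕ) (lb : Label Γ l k), a < b → h[b]? = some lb → threadOf lb ≠ t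

/-- A complete trace: no open calls. -/
def CompleteTrace {Γ : Type} {l k : ℕ} (h : List (Label Γ l k)) : Prop :=
  ∀ a : ℕ, ¬ IsOpenCall h a

/-- A method event: positions of a matching call/return pair, together with
its thread and the name of the called method. -/
structure MEvent (Γ : Type) (l k : ℕ) where
  callPos : ℕ
  retPos : ℕ
  thread : Fin k
  name : MName Γ l

/-- `e` is a method event of the trace `h`: its call and return positions
match (same thread, no event of that thread in between). -/
def IsMEvent {Γ : Type} {l k : ℕ} (h : List (Label Γ l k))
    (e : MEvent Γ l k) : Prop :=
  e.callPos < e.retPos ∧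
  h[e.callPos]? = some (Label.call e.thread e.name) ∧
  h[e.retPos]? = some (Label.ret e.thread) ∧
  ∀ (c : ℕ) (lb : Label Γ l k), e.callPos < c → c < e.retPos →
    h[c]? = some lb → threadOf lb ≠ e.thread

/-- The happens-before relation: `e` returns before `e'` is called. -/
def HB {Γ : Type} {l k : ℕ} (e e' : MEvent Γ l k) : Prop :=
  e.retPos < e'.callPos

/-- A complete trace `h` is linearizable w.r.t. a specification `S`: there is
a total order (a list without repetition) of all its method events extending
happens-before whose label sequence is in `S`. -/
def LinearizableComplete {Γ : Type} {l k : ℕ} (h : List (Label Γ l k))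
    (S : Set (List (MName Γ l))) : Prop :=
  ∃ es : List (MEvent Γ l k), es.Nodup ∧
    (∀ e : MEvent Γ l k, IsMEvent h e ↔ e ∈ es) ∧
    es.Pairwise (fun e e' => ¬ HB e' e) ∧
    es.map MEvent.name ∈ S

/-- Remove from `h` the letters at the positions in `S`. -/
def deletePositions {α : Type} (h : List α) (S : Finset ℕ) : List α :=
  (List.range h.length).filterMap (fun a => if a ∈ S then none else h[a]?)

/-- `h'` is a completion of `h`: it is obtained by deleting some open calls of
`h` and appending return events at the end, and it is complete. -/
def CompletionOf {Γ : Type} {l k : ℕ} (h h' : List (Label Γ l k)) : Prop :=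
  ∃ (S : Finset ℕ) (tail : List (Label Γ l k)),
    (∀ a ∈ S, IsOpenCall h a) ∧
    (∀ lb ∈ tail, ∃ t : Fin k, lb = Label.ret t) ∧
    h' = deletePositions h S ++ tail ∧
    CompleteTrace h'

/-- A trace is linearizable w.r.t. `S` if some completion of it is. -/
def Linearizable {Γ : Type} {l k : ℕ} (h : List (Label Γ l k))
    (S : Set (List (MName Γ l))) : Prop :=
  ∃ h' : List (Label Γ l k), CompletionOf h h' ∧ LinearizableComplete h' S

/-- The specification `S_N`: words containing zero or at least two `M_Tick`,
or zero or at least two `M_i` for some `i`, or whose projection onto the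
letters `M_i`, `M_γ` is (up to the renaming `γ ↦ M_γ`, `a_i ↦ M_i`) in the
language of the NFA `Nfa`. -/
def SpecN {Γ : Type} [DecidableEq Γ] {l : ℕ} {σ : Type}
    (Nfa : NFA (Γ ⊕ Fin l) σ) : Set (List (MName Γ l)) :=
  {ws | ws.count tickName ≠ 1 ∨
        (∃ i : Fin l, ws.count (insName i) ≠ 1) ∨
        (∃ x ∈ Nfa.accepts, ws.filterMap Sum.getLeft? = x)}

/-- `u` (over `Γ ∪ A`) is an insertion of the letters `A = {a_1, …, a_l}`
(the elements of `Fin l`) into `w ∈ Γ*`: each letter of `A` is inserted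
exactly once, in any order, anywhere in `w`. -/
def IsInsertion {Γ : Type} {l : ℕ} (w : List Γ) (u : List (Γ ⊕ Fin l)) : Prop :=
  ∃ (ws : Fin (l + 1) → List Γ) (p : Equiv.Perm (Fin l)),
    w = (List.ofFn ws).flatten ∧
    u = (ws 0).map Sum.inl ++
        (List.ofFn fun i : Fin l => Sum.inr (p i) :: (ws i.succ).map Sum.inl).flatten

section Aux

variable {Γ : Type} {l k : ℕ}

/-- List identity: reading off a list by positions gives the list back. -/
theorem filterMap_getElem?_range {α : Type} (h : List α) :
    (List.range h.length).filterMap (fun a => h[a]?) = h := by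
  induction h with
  | nil => simp
  | cons x t ih =>
    rw [List.length_cons, List.range_succ_eq_map, List.filterMap_cons]
    simp only [List.getElem?_cons_zero, List.filterMap_map, Function.comp_def,
      Nat.succ_eq_add_one, List.getElem?_cons_succ]
    rw [ih]

theorem countP_filterMap_any {α β : Type} (p : β → Bool) (f : α → Option β) (L : List α) :
    (L.filterMap f).countP p = L.countP (fun a => (f a).any p) := by
  rw [List.countP_filterMap]
  apply List.countP_congr
  intro a _
  cases hfa : f a <;> simp [hfa, Option.any]

/-- Uniqueness of method events with a given call position. -/
theorem mevent_unique {h : List (Label Γ l k)} {e e' : MEvent Γ l k}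
    (he : IsMEvent h e) (he' : IsMEvent h e') (hc : e.callPos = e'.callPos) : e = e' := by
  obtain ⟨a, r, t, m⟩ := e
  obtain ⟨a', r', t', m'⟩ := e'
  simp only [MEvent.mk.injEq]
  obtain ⟨hlt, hcall, hret, hbet⟩ := he
  obtain ⟨hlt', hcall', hret', hbet'⟩ := he'
  simp only at hc hlt hcall hret hlt' hcall' hret' ⊢
  subst hc
  rw [hcall'] at hcall
  have htm : t' = t ∧ m' = m := by
    have := Option.some.inj hcall
    injection this with h1 h2
    exact ⟨h1, h2⟩
  obtain ⟨ht, hm⟩ := htm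
  rw [ht] at hret' hbet'
  refine ⟨rfl, ?_, ht.symm, hm.symm⟩
  rcases Nat.lt_trichotomy r r' with hrr | hrr | hrr
  · exact absurd rfl (hbet' r (Label.ret t) hlt hrr hret)
  · exact hrr
  · exact absurd rfl (hbet r' (Label.ret t) hlt' hrr hret')

open Classical in
/-- The unique method event with call position `a`, if any. -/
noncomputable def evAt (h : List (Label Γ l k)) (a : ℕ) : Option (MEvent Γ l k) :=
  if hx : ∃ e : MEvent Γ l k, IsMEvent h e ∧ e.callPos = a then some hx.choose else none

theorem evAt_some {h : List (Label Γ l k)} {a : ℕ} {e : MEvent Γ l k}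
    (hs : evAt h a = some e) : IsMEvent h e ∧ e.callPos = a := by
  unfold evAt at hs
  split at hs
  · rename_i hx
    have := Option.some.inj hs
    rw [← this]
    exact hx.choose_spec
  · simp at hs

theorem evAt_of_isMEvent {h : List (Label Γ l k)} {e : MEvent Γ l k}
    (he : IsMEvent h e) : evAt h e.callPos = some e := by
  have hx : ∃ e' : MEvent Γ l k, IsMEvent h e' ∧ e'.callPos = e.callPos := ⟨e, he, rfl⟩
  unfold evAt
  rw [dif_pos hx]
  exact congrArg some (mevent_unique hx.choose_spec.1 he hx.choose_spec.2)

theorem evAt_none {h : List (Label Γ l k)} {a : ℕ}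
    (hno : ∀ (t : Fin k) (m : MName Γ l), h[a]? ≠ some (Label.call t m)) :
    evAt h a = none := by
  unfold evAt
  rw [dif_neg]
  rintro ⟨e, he, rfl⟩
  exact hno e.thread e.name he.2.1

/-- The "first event of a thread after one of its calls is a return" property. -/
def FirstRet (tr : List (Label Γ l k)) : Prop :=
  ∀ (a b : ℕ) (t : Fin k) (m : MName Γ l) (lb : Label Γ l k), a < b →
    tr[a]? = some (Label.call t m) → tr[b]? = some lb → threadOf lb = t →
    (∃ c lc, a < c ∧ c < b ∧ tr[c]? = some lc ∧ threadOf lc = t) ∨ lb = Label.ret t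

/-- The "first event of a busy thread is a return" property. -/
def BusyRet (μ : Fin k → Option (MName Γ l × ℕ)) (tr : List (Label Γ l k)) : Prop :=
  ∀ (b : ℕ) (t : Fin k) (lb : Label Γ l k), μ t ≠ none →
    tr[b]? = some lb → threadOf lb = t →
    (∃ c lc, c < b ∧ tr[c]? = some lc ∧ threadOf lc = t) ∨ lb = Label.ret t

theorem steps_invariant {c c' : LCfg Γ l k} {tr : List (Label Γ l k)}
    (h : Steps c tr c') : FirstRet tr ∧ BusyRet c.2 tr := by
  induction h with
  | nil c =>
    constructor
    · intro a b t m lb hab ha hb hth; simp at ha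
    · intro b t lb hbusy hb hth; simp at hb
  | @call d μ t' m' tr' c' hμ hs ih =>
    obtain ⟨ihQ, ihR⟩ := ih
    constructor
    · intro a b t m lb hab ha hb hth
      match b, hab with
      | b + 1, hab =>
        rw [List.getElem?_cons_succ] at hb
        match a with
        | 0 =>
          rw [List.getElem?_cons_zero] at ha
          have h1 := Option.some.inj ha
          injection h1 with h1 h2
          have hbusy : Function.update μ t' (some (m', 0)) t ≠ none := by
            rw [← h1]; simp [Function.update]
          rcases ihR b t lb hbusy hb hth with ⟨c, lc, h1, h2, h3⟩ | h
          · exact Or.inl ⟨c + 1, lc, Nat.succ_pos c, Nat.succ_lt_succ h1,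
              by rw [List.getElem?_cons_succ]; exact h2, h3⟩
          · exact Or.inr h
        | a + 1 =>
          rw [List.getElem?_cons_succ] at ha
          rcases ihQ a b t m lb (Nat.lt_of_succ_lt_succ hab) ha hb hth with
            ⟨c, lc, h1, h2, h3, h4⟩ | h
          · exact Or.inl ⟨c + 1, lc, Nat.succ_lt_succ h1, Nat.succ_lt_succ h2,
              by rw [List.getElem?_cons_succ]; exact h3, h4⟩
          · exact Or.inr h
    · intro b t lb hbusy hb hth
      match b with
      | 0 =>
        rw [List.getElem?_cons_zero] at hb
        have h1 := Option.some.inj hb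
        subst h1
        simp only [threadOf] at hth
        rw [hth] at hμ
        exact absurd hμ hbusy
      | b + 1 =>
        rw [List.getElem?_cons_succ] at hb
        have hne : t ≠ t' := by
          intro he; subst he; exact hbusy hμ
        have hbusy' : Function.update μ t' (some (m', 0)) t ≠ none := by
          rw [Function.update_of_ne hne]; exact hbusy
        rcases ihR b t lb hbusy' hb hth with ⟨c, lc, h1, h2, h3⟩ | h
        · exact Or.inl ⟨c + 1, lc, Nat.succ_lt_succ h1,
            by rw [List.getElem?_cons_succ]; exact h2, h3⟩
        · exact Or.inr h
  | @ret d μ t' m' tr' c' hμ hs ih =>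
    obtain ⟨ihQ, ihR⟩ := ih
    constructor
    · intro a b t m lb hab ha hb hth
      match b, hab with
      | b + 1, hab =>
        rw [List.getElem?_cons_succ] at hb
        match a with
        | 0 =>
          rw [List.getElem?_cons_zero] at ha
          exact absurd (Option.some.inj ha) (by intro h; cases h)
        | a + 1 =>
          rw [List.getElem?_cons_succ] at ha
          rcases ihQ a b t m lb (Nat.lt_of_succ_lt_succ hab) ha hb hth with
            ⟨c, lc, h1, h2, h3, h4⟩ | h
          · exact Or.inl ⟨c + 1, lc, Nat.succ_lt_succ h1, Nat.succ_lt_succ h2,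
              by rw [List.getElem?_cons_succ]; exact h3, h4⟩
          · exact Or.inr h
    · intro b t lb hbusy hb hth
      match b with
      | 0 =>
        rw [List.getElem?_cons_zero] at hb
        have h1 := Option.some.inj hb
        subst h1
        simp only [threadOf] at hth
        exact Or.inr (by rw [hth])
      | b + 1 =>
        rw [List.getElem?_cons_succ] at hb
        by_cases hne : t = t'
        · subst hne
          exact Or.inl ⟨0, Label.ret t, Nat.succ_pos b,
            by rw [List.getElem?_cons_zero], rfl⟩
        · have hbusy' : Function.update μ t' none t ≠ none := by
            rw [Function.update_of_ne hne]; exact hbusy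
          rcases ihR b t lb hbusy' hb hth with ⟨c, lc, h1, h2, h3⟩ | h
          · exact Or.inl ⟨c + 1, lc, Nat.succ_lt_succ h1,
              by rw [List.getElem?_cons_succ]; exact h2, h3⟩
          · exact Or.inr h
  | @internal d μ d' t' m' pc pc' tr' c' hμ htrans hs ih =>
    obtain ⟨ihQ, ihR⟩ := ih
    refine ⟨ihQ, ?_⟩
    intro b t lb hbusy hb hth
    apply ihR b t lb ?_ hb hth
    show Function.update μ t' (some (m', pc')) t ≠ none
    by_cases hne : t = t'
    · subst hne; simp [Function.update]
    · rw [Function.update_of_ne hne]; exact hbusy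

end Aux
section Del

variable {α : Type}

/-- The survivor function of `deletePositions`. -/
def delFun (h : List α) (S : Finset ℕ) : ℕ → Option α :=
  fun a => if a ∈ S then none else h[a]?

theorem deletePositions_eq (h : List α) (S : Finset ℕ) :
    deletePositions h S = (List.range h.length).filterMap (delFun h S) := rfl

/-- New index of a surviving position. -/
def delIdx (h : List α) (S : Finset ℕ) (a : ℕ) : ℕ :=
  ((List.range a).filterMap (delFun h S)).length

theorem delIdx_getElem (h : List α) (S : Finset ℕ) {a : ℕ}
    (ha : a < h.length) (haS : a ∉ S) :
    (deletePositions h S)[delIdx h S a]? = h[a]? := by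
  have hx : delFun h S a = some h[a] := by
    simp [delFun, haS, List.getElem?_eq_getElem ha]
  have hsplit : List.range h.length =
      (List.range a ++ [a]) ++ (List.range (h.length - (a + 1))).map ((a + 1) + ·) := by
    rw [← List.range_succ, ← List.range_add]
    congr 1
    omega
  rw [deletePositions_eq, hsplit, List.filterMap_append, List.filterMap_append]
  have h1 : List.filterMap (delFun h S) [a] = [h[a]] := by simp [hx]
  rw [h1, List.append_assoc]
  have h2 : delIdx h S a = (List.filterMap (delFun h S) (List.range a)).length := rfl
  rw [h2, List.getElem?_append_right (le_refl _)]
  simp [List.getElem?_eq_getElem ha]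

theorem delIdx_mono (h : List α) (S : Finset ℕ) {a b : ℕ} (hab : a ≤ b) :
    delIdx h S a ≤ delIdx h S b :=
  List.Sublist.length_le (List.Sublist.filterMap _ (List.range_sublist.mpr hab))

theorem delIdx_strict (h : List α) (S : Finset ℕ) {a b : ℕ} (hab : a < b)
    (ha : a < h.length) (haS : a ∉ S) : delIdx h S a < delIdx h S b := by
  have h1 : delIdx h S (a + 1) = delIdx h S a + 1 := by
    have hx : delFun h S a = some h[a] := by
      simp [delFun, haS, List.getElem?_eq_getElem ha]
    simp [delIdx, List.range_succ, List.filterMap_append, hx]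
  have h2 := delIdx_mono h S (show a + 1 ≤ b by omega)
  omega

theorem delIdx_surj (h : List α) (S : Finset ℕ) :
    ∀ (m c : ℕ), c < ((List.range m).filterMap (delFun h S)).length →
      ∃ a, a < m ∧ a ∉ S ∧ a < h.length ∧ delIdx h S a = c := by
  intro m
  induction m with
  | zero => intro c hc; simp at hc
  | succ m ih =>
    intro c hc
    rw [List.range_succ, List.filterMap_append] at hc
    by_cases hcm : c < ((List.range m).filterMap (delFun h S)).length
    · obtain ⟨a, h1, h2, h3, h4⟩ := ih c hcm
      exact ⟨a, by omega, h2, h3, h4⟩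
    · rcases hm : delFun h S m with _ | x
      · rw [List.length_append] at hc
        simp [hm] at hc
        omega
      · have hlen : (List.filterMap (delFun h S) [m]).length = 1 := by simp [hm]
        rw [List.length_append, hlen] at hc
        have hc' : c = ((List.range m).filterMap (delFun h S)).length := by omega
        have hmS : m ∉ S := by
          intro hmem
          simp [delFun, hmem] at hm
        have hml : m < h.length := by
          by_contra hh
          have hnone : h[m]? = none := List.getElem?_eq_none (by omega)
          simp [delFun, hmS, hnone] at hm
        exact ⟨m, Nat.lt_succ_self m, hmS, hml, hc'.symm⟩

theorem delIdx_surj' (h : List α) (S : Finset ℕ) {c : ℕ}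
    (hc : c < (deletePositions h S).length) :
    ∃ a, a ∉ S ∧ a < h.length ∧ delIdx h S a = c ∧ (deletePositions h S)[c]? = h[a]? := by
  obtain ⟨a, _, h2, h3, h4⟩ := delIdx_surj h S h.length c hc
  exact ⟨a, h2, h3, h4, by rw [← h4]; exact delIdx_getElem h S h3 h2⟩

theorem deletePositions_empty (h : List α) : deletePositions h (∅ : Finset ℕ) = h := by
  unfold deletePositions
  simp only [Finset.notMem_empty, if_false]
  exact filterMap_getElem?_range h

end Del
section Lin

variable {Γ : Type} {l k : ℕ}

/-- The "is a call to `M_Tick`" predicate on labels. -/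
def isTickL [DecidableEq Γ] : Label Γ l k → Bool := fun lb =>
  match lb with
  | Label.call _ m => decide (m = tickName)
  | Label.ret _ => false

theorem beq_tick_iff [DecidableEq Γ] (m : MName Γ l) :
    (m == tickName) = true ↔ m = tickName := by
  cases m with
  | inl x =>
    constructor
    · intro h; exact Bool.noConfusion h
    · intro h; simp [tickName] at h
  | inr u =>
    cases u
    constructor
    · intro _; rfl
    · intro _; rfl

theorem lin_of_tick_count_ne_one [DecidableEq Γ] {σ : Type}
    (Nfa : NFA (Γ ⊕ Fin l) σ) {tr : List (Label Γ l k)}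
    (htr : IsTrace tr) (S : Finset ℕ) (hS : ∀ a ∈ S, IsOpenCall tr a)
    (hcnt : (deletePositions tr S).countP isTickL ≠ 1) :
    Linearizable tr (SpecN Nfa) := by
  classical
  obtain ⟨cfin, hsteps⟩ := htr
  have hQ : FirstRet tr := (steps_invariant hsteps).1
  set D := deletePositions tr S with hD
  set tail : List (Label Γ l k) := (List.finRange k).map Label.ret with htail
  set h' := D ++ tail with hh'
  have tail_ret : ∀ lb ∈ tail, ∃ t : Fin k, lb = Label.ret t := by
    intro lb hlb
    rw [htail, List.mem_map] at hlb
    obtain ⟨t, _, h⟩ := hlb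
    exact ⟨t, h.symm⟩
  have tail_get : ∀ (j : ℕ) (lb : Label Γ l k), tail[j]? = some lb →
      ∃ t : Fin k, lb = Label.ret t ∧ j = (t : ℕ) := by
    intro j lb hj
    rw [htail, List.getElem?_map] at hj
    rcases hjk : (List.finRange k)[j]? with _ | t
    · rw [hjk] at hj; simp at hj
    · rw [hjk] at hj
      simp only [Option.map_some] at hj
      refine ⟨t, (Option.some.inj hj).symm, ?_⟩
      obtain ⟨hlt, hget⟩ := List.getElem?_eq_some_iff.mp hjk
      rw [List.getElem_finRange] at hget
      rw [← hget]
      simp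
  have tail_has : ∀ t : Fin k, tail[(t : ℕ)]? = some (Label.ret t) := by
    intro t
    rw [htail, List.getElem?_map]
    have h1 : ((t : ℕ)) < (List.finRange k).length := by
      rw [List.length_finRange]; exact t.isLt
    rw [List.getElem?_eq_getElem h1, List.getElem_finRange]
    simp
  -- KEY: every call in h' is matched by a first next same-thread event, a return
  have KEY : ∀ (c : ℕ) (t : Fin k) (m : MName Γ l), h'[c]? = some (Label.call t m) →
      ∃ β, c < β ∧ h'[β]? = some (Label.ret t) ∧
        ∀ (b : ℕ) (lc : Label Γ l k), c < b → b < β → h'[b]? = some lc →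
          threadOf lc ≠ t := by
    intro c t m hc
    have hcD : c < D.length := by
      by_contra hge
      rw [hh', List.getElem?_append_right (by omega)] at hc
      obtain ⟨t', ht'⟩ := tail_ret _ (List.mem_of_getElem? hc)
      cases ht'
    have hcD' : h'[c]? = D[c]? := by rw [hh']; exact List.getElem?_append_left hcD
    obtain ⟨a, haS, haL, haI, haget⟩ := delIdx_surj' tr S (hD ▸ hcD)
    have hatr : tr[a]? = some (Label.call t m) := by
      rw [← haget, ← hD, ← hcD']; exact hc
    by_cases hopen : ∀ (b : ℕ) (lb : Label Γ l k), a < b → tr[b]? = some lb →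
        threadOf lb ≠ t
    · -- the call is open in tr; its return is in the tail
      refine ⟨D.length + (t : ℕ), by omega, ?_, ?_⟩
      · rw [hh', List.getElem?_append_right (by omega)]
        have h1 : D.length + (t : ℕ) - D.length = (t : ℕ) := by omega
        rw [h1]
        exact tail_has t
      · intro b lc hcb hbβ hb hth
        by_cases hbD : b < D.length
        · rw [hh', List.getElem?_append_left hbD] at hb
          obtain ⟨b', hb'S, hb'L, hb'I, hb'get⟩ := delIdx_surj' tr S (hD ▸ hbD)
          have hlc : tr[b']? = some lc := by rw [← hb'get, ← hD]; exact hb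
          have hab' : a < b' := by
            by_contra hle
            have := delIdx_mono tr S (not_lt.mp hle)
            omega
          exact hopen b' lc hab' hlc hth
        · rw [hh', List.getElem?_append_right (not_lt.mp hbD)] at hb
          obtain ⟨t', hlc, hjt⟩ := tail_get _ _ hb
          rw [hlc] at hth
          have ht't : t' = t := hth
          rw [ht't] at hjt
          omega
    · -- the call is matched in tr
      push_neg at hopen
      obtain ⟨b1, lb1, hab1, hb1, hth1⟩ := hopen
      have hex : ∃ b, a < b ∧ ∃ lb : Label Γ l k, tr[b]? = some lb ∧ threadOf lb = t :=
        ⟨b1, hab1, lb1, hb1, hth1⟩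
      obtain ⟨hab₀, lb₀, hb₀, hth₀⟩ := Nat.find_spec hex
      have hmin : ∀ (cc : ℕ), a < cc → cc < Nat.find hex → ∀ (lcc : Label Γ l k),
          tr[cc]? = some lcc → threadOf lcc ≠ t := by
        intro cc h1 h2 lcc h3 h4
        exact (Nat.find_min hex h2) ⟨h1, lcc, h3, h4⟩
      have hret : lb₀ = Label.ret t := by
        rcases hQ a (Nat.find hex) t m lb₀ hab₀ hatr hb₀ hth₀ with
          ⟨cc, lcc, h1, h2, h3, h4⟩ | h
        · exact absurd h4 (hmin cc h1 h2 lcc h3)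
        · exact h
      obtain ⟨hb₀L, -⟩ := List.getElem?_eq_some_iff.mp hb₀
      have hb₀S : Nat.find hex ∉ S := by
        intro hmem
        obtain ⟨t2, m2, hcall2, -⟩ := hS (Nat.find hex) hmem
        rw [hb₀, hret] at hcall2
        cases hcall2
      have hDb : D[delIdx tr S (Nat.find hex)]? = some (Label.ret t) := by
        rw [hD, delIdx_getElem tr S hb₀L hb₀S, hb₀, hret]
      obtain ⟨hβD, -⟩ := List.getElem?_eq_some_iff.mp hDb
      have hcβ : c < delIdx tr S (Nat.find hex) := by
        rw [← haI]
        exact delIdx_strict tr S hab₀ haL haS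
      refine ⟨delIdx tr S (Nat.find hex), hcβ, ?_, ?_⟩
      · rw [hh']
        rw [List.getElem?_append_left hβD]
        exact hDb
      · intro b lc hcb hbβ hb hth
        have hbD : b < D.length := by omega
        rw [hh', List.getElem?_append_left hbD] at hb
        obtain ⟨b', hb'S, hb'L, hb'I, hb'get⟩ := delIdx_surj' tr S (hD ▸ hbD)
        have hlc : tr[b']? = some lc := by rw [← hb'get, ← hD]; exact hb
        have hab' : a < b' := by
          by_contra hle
          have := delIdx_mono tr S (not_lt.mp hle)
          omega
        have hb'b₀ : b' < Nat.find hex := by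
          by_contra hle
          have := delIdx_mono tr S (not_lt.mp hle)
          omega
        exact hmin b' hab' hb'b₀ lc hlc hth
  -- completeness of h'
  have hcomplete : CompleteTrace h' := by
    intro a ha
    obtain ⟨t, m, hcall, hno⟩ := ha
    obtain ⟨β, hβ1, hβ2, -⟩ := KEY a t m hcall
    exact hno β (Label.ret t) hβ1 hβ2 rfl
  -- every call of h' opens a method event
  have hevent : ∀ (c : ℕ) (t : Fin k) (m : MName Γ l),
      h'[c]? = some (Label.call t m) →
      ∃ e : MEvent Γ l k, IsMEvent h' e ∧ e.callPos = c ∧ e.name = m := by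
    intro c t m hc
    obtain ⟨β, h1, h2, h3⟩ := KEY c t m hc
    exact ⟨⟨c, β, t, m⟩, ⟨h1, hc, h2, h3⟩, rfl, rfl⟩
  -- the linearization
  set es := (List.range h'.length).filterMap (evAt h') with hes
  have hmem : ∀ e : MEvent Γ l k, IsMEvent h' e ↔ e ∈ es := by
    intro e
    constructor
    · intro he
      rw [hes, List.mem_filterMap]
      obtain ⟨hlen, -⟩ := List.getElem?_eq_some_iff.mp he.2.1
      exact ⟨e.callPos, List.mem_range.mpr hlen, evAt_of_isMEvent he⟩
    · intro hm
      rw [hes, List.mem_filterMap] at hm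
      obtain ⟨a, -, ha⟩ := hm
      exact (evAt_some ha).1
  have hnodup : es.Nodup := by
    rw [hes]
    apply List.Nodup.filterMap ?_ List.nodup_range
    intro a a' e hae hae'
    rw [Option.mem_def] at hae hae'
    have h1 := (evAt_some hae).2
    have h2 := (evAt_some hae').2
    omega
  have hpair : es.Pairwise (fun e e' => ¬ HB e' e) := by
    rw [hes, List.pairwise_filterMap]
    apply List.Pairwise.imp ?_ List.pairwise_lt_range
    intro a b hab e hae e' hbe'
    obtain ⟨hEe, hca⟩ := evAt_some hae
    obtain ⟨hEe', hcb⟩ := evAt_some hbe'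
    have h1 := hEe'.1
    unfold HB
    omega
  -- counting the tick events
  have hcount : (es.map MEvent.name).count tickName ≠ 1 := by
    rw [List.count_eq_countP, List.countP_map, hes, countP_filterMap_any]
    have hptw : ∀ a ∈ List.range h'.length,
        ((evAt h' a).any (fun e => ((fun x => x == tickName) ∘ MEvent.name) e)) = true ↔
        ((h'[a]?).any isTickL) = true := by
      intro a _
      rcases hca : h'[a]? with _ | lb
      · rw [evAt_none (fun t m h => by rw [hca] at h; cases h)]
        simp [Option.any]
      · rcases lb with ⟨t, m⟩ | t
        · obtain ⟨e, he, hcp, hnm⟩ := hevent a t m hca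
          rw [← hcp, evAt_of_isMEvent he]
          simp only [Option.any, isTickL, hnm, Function.comp]
          rw [beq_tick_iff]
          simp
        · rw [evAt_none (fun t' m' h => by
            rw [hca] at h
            cases h)]
          simp [Option.any, isTickL]
    rw [List.countP_congr hptw]
    have hid : h'.countP isTickL =
        (List.range h'.length).countP (fun a => (h'[a]?).any isTickL) := by
      conv_lhs => rw [← filterMap_getElem?_range h']
      rw [countP_filterMap_any]
    rw [← hid, hh', List.countP_append]
    have htail0 : tail.countP isTickL = 0 := by
      rw [List.countP_eq_zero]
      intro lb hlb
      obtain ⟨t, rfl⟩ := tail_ret lb hlb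
      simp [isTickL]
    rw [htail0]
    simpa using hcnt
  -- assemble
  refine ⟨h', ⟨S, tail, hS, tail_ret, by rw [hh', hD], hcomplete⟩,
    es, hnodup, hmem, hpair, Or.inl hcount⟩

end Lin

/-- Every trace of `Lib` with `k = l + 2` threads that is
not linearizable w.r.t. `S_N` contains exactly one call event to `M_Tick`, and
this call is matched by a return event. -/
theorem unique_completed_tick
    (Γ : Type) (instF : Fintype Γ) (instD : DecidableEq Γ) (l : ℕ)
    (σ : Type) (instσ : Fintype σ) (Nfa : NFA (Γ ⊕ Fin l) σ)
    (tr : List (Label Γ l (l + 2)))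
    (htr : IsTrace tr) (hnl : ¬ Linearizable tr (SpecN Nfa)) :
    tr.countP (fun lb => match lb with
      | Label.call _ m => decide (m = tickName)
      | Label.ret _ => false) = 1 ∧
    ∀ (a : ℕ) (t : Fin (l + 2)), tr[a]? = some (Label.call t tickName) →
      ∃ e : MEvent Γ l (l + 2), IsMEvent tr e ∧ e.callPos = a := by
  classical
  obtain ⟨cfin, hsteps⟩ := htr
  have hQ : FirstRet tr := (steps_invariant hsteps).1
  have htr' : IsTrace tr := ⟨cfin, hsteps⟩
  have h1 : tr.countP isTickL = 1 := by
    by_contra hne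
    apply hnl
    apply lin_of_tick_count_ne_one Nfa htr' ∅
      (fun a ha => absurd ha (Finset.notMem_empty a))
    rw [deletePositions_empty]
    exact hne
  have h1' : tr.countP (fun lb => match lb with
      | Label.call _ m => decide (m = tickName)
      | Label.ret _ => false) = 1 := by
    rw [← h1]
    exact List.countP_congr (fun lb _ => by cases lb <;> simp [isTickL])
  refine ⟨h1', ?_⟩
  intro a t ha
  have haL : a < tr.length := by
    obtain ⟨h, -⟩ := List.getElem?_eq_some_iff.mp ha
    exact h
  have hnotopen : ¬ IsOpenCall tr a := by
    intro hopen
    apply hnl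
    apply lin_of_tick_count_ne_one Nfa htr' {a} ?_ ?_
    · intro x hx
      rw [Finset.mem_singleton] at hx
      subst hx
      exact hopen
    · have hz : (deletePositions tr {a}).countP isTickL = 0 := by
        rw [List.countP_eq_zero]
        intro lb hlb
        rw [deletePositions_eq, List.mem_filterMap] at hlb
        obtain ⟨b, hbr, hfb⟩ := hlb
        have hba : b ≠ a := by
          intro h; subst h; simp [delFun] at hfb
        have hbtr : tr[b]? = some lb := by
          simp only [delFun, Finset.mem_singleton, hba, if_false] at hfb
          exact hfb
        intro htick
        have hcnt2 : tr.countP isTickL =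
            (List.range tr.length).countP (fun c => (tr[c]?).any isTickL) := by
          conv_lhs => rw [← filterMap_getElem?_range tr]
          rw [countP_filterMap_any]
        rw [hcnt2, List.countP_eq_length_filter] at h1
        obtain ⟨x, hx⟩ := List.length_eq_one_iff.mp h1
        have hmema : a ∈ (List.range tr.length).filter
            (fun c => (tr[c]?).any isTickL) := by
          rw [List.mem_filter]
          refine ⟨List.mem_range.mpr haL, ?_⟩
          rw [ha]
          simp [Option.any, isTickL]
        have hmemb : b ∈ (List.range tr.length).filter
            (fun c => (tr[c]?).any isTickL) := by
          rw [List.mem_filter]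
          refine ⟨hbr, ?_⟩
          rw [hbtr]
          simpa [Option.any] using htick
        rw [hx, List.mem_singleton] at hmema hmemb
        exact hba (hmemb.trans hmema.symm)
      omega
  rw [IsOpenCall] at hnotopen
  push_neg at hnotopen
  obtain ⟨b1, lb1, hab1, hb1, hth1⟩ := hnotopen t tickName ha
  have hex : ∃ b, a < b ∧ ∃ lb : Label Γ l (l + 2), tr[b]? = some lb ∧ threadOf lb = t :=
    ⟨b1, hab1, lb1, hb1, hth1⟩
  obtain ⟨hab₀, lb₀, hb₀, hth₀⟩ := Nat.find_spec hex
  have hmin : ∀ (cc : ℕ), a < cc → cc < Nat.find hex → ∀ lcc : Label Γ l (l + 2),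
      tr[cc]? = some lcc → threadOf lcc ≠ t := by
    intro cc hc1 hc2 lcc hc3 hc4
    exact Nat.find_min hex hc2 ⟨hc1, lcc, hc3, hc4⟩
  have hret : lb₀ = Label.ret t := by
    rcases hQ a (Nat.find hex) t tickName lb₀ hab₀ ha hb₀ hth₀ with
      ⟨cc, lcc, u1, u2, u3, u4⟩ | h
    · exact absurd u4 (hmin cc u1 u2 lcc u3)
    · exact h
  exact ⟨⟨a, Nat.find hex, t, tickName⟩,
    ⟨hab₀, ha, by rw [← hret]; exact hb₀,
      fun c lb hc1 hc2 h3 => hmin c hc1 hc2 lb h3⟩, rfl⟩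

end Paper
end
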